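/- arXiv:1602.08515 — 4 statements merged into one kernel-verified Lean document; each statement's English description precedes it below -/
import Mathlib

section
/- Let T_f be a spanning tree of the L-by-T grid (with only forward and downward arcs) in which every vertex is accessible from row one via a directed path in T_f. For l ∈ [L] and i ∈ [T], define κ_l(i) as the smallest j such that T_f contains a directed path from v_{1,j} to v_{l,i}. Then κ_l is non-decreasing in i. -/
/-- Arcs of the `L`-by-`T` grid (0-indexed): `(true,l,t)` is the downward arc
`(l,t)→(l+1,t)` and `(false,l,t)` is the forward arc `(l,t)→(l,t+1)`. -/
abbrev GArc := Bool × ℕ × ℕ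

def gTail (a : GArc) : ℕ × ℕ := (a.2.1, a.2.2)

def gHead (a : GArc) : ℕ × ℕ := if a.1 then (a.2.1 + 1, a.2.2) else (a.2.1, a.2.2 + 1)

def ValidArc (L T : ℕ) (a : GArc) : Prop :=
  if a.1 then a.2.1 + 1 < L ∧ a.2.2 < T else a.2.1 < L ∧ a.2.2 + 1 < T

/-- The arc set `S` contains an undirected cycle. -/
def HasUndirCycle {V A : Type*} (tail head : A → V) (S : Set A) : Prop :=
  ∃ (k : ℕ) (arcs : Fin k → A) (vs : Fin (k + 1) → V),
    1 ≤ k ∧ Function.Injective arcs ∧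
    Function.Injective (fun i : Fin k => vs i.castSucc) ∧
    vs (Fin.last k) = vs 0 ∧
    ∀ i : Fin k, arcs i ∈ S ∧
      ((tail (arcs i) = vs i.castSucc ∧ head (arcs i) = vs i.succ) ∨
        (head (arcs i) = vs i.castSucc ∧ tail (arcs i) = vs i.succ))

/-- One undirected step along an arc of `S`. -/
def undirStep (S : Set GArc) (v w : ℕ × ℕ) : Prop :=
  ∃ a ∈ S, (gTail a = v ∧ gHead a = w) ∨ (gTail a = w ∧ gHead a = v)

/-- One directed step along an arc of `S`. -/
def dirStep (S : Set GArc) (v w : ℕ × ℕ) : Prop :=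
  ∃ a ∈ S, gTail a = v ∧ gHead a = w

/-- `S` is a spanning tree of the `L`-by-`T` grid: all its arcs are grid arcs, any two
grid vertices are joined by an undirected path in `S`, and `S` has no undirected cycle. -/
def IsGridSpanningTree (L T : ℕ) (S : Set GArc) : Prop :=
  (∀ a ∈ S, ValidArc L T a) ∧
    (∀ v w : ℕ × ℕ, v.1 < L → v.2 < T → w.1 < L → w.2 < T →
      Relation.ReflTransGen (undirStep S) v w) ∧
    ¬ HasUndirCycle gTail gHead S

/-- Every grid vertex is accessible from row one via a directed path in `S`. -/
def Accessible (L T : ℕ) (S : Set GArc) : Prop :=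
  ∀ l t, l < L → t < T → ∃ j < T, Relation.ReflTransGen (dirStep S) (0, j) (l, t)

/-- The set of row-one columns `j` from which `(l,i)` is reachable by a directed path
in `S`; `κ_l(i)` is its least element. -/
def kappaSet (T' : ℕ) (S : Set GArc) (l i : ℕ) : Set ℕ :=
  {j | j < T' ∧ Relation.ReflTransGen (dirStep S) ((0, j) : ℕ × ℕ) (l, i)}

lemma dirStep_cases {S : Set GArc} {v w : ℕ × ℕ} (h : dirStep S v w) :
    w = (v.1 + 1, v.2) ∨ w = (v.1, v.2 + 1) := by
  obtain ⟨a, -, ht, hh⟩ := h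
  subst ht
  cases hb : a.1
  · right; rw [← hh]; simp [gHead, gTail, hb]
  · left; rw [← hh]; simp [gHead, gTail, hb]

lemma rtg_mono {S : Set GArc} {u v : ℕ × ℕ}
    (h : Relation.ReflTransGen (dirStep S) u v) : u.1 ≤ v.1 ∧ u.2 ≤ v.2 := by
  induction h with
  | refl => exact ⟨le_refl _, le_refl _⟩
  | tail _ hstep ih =>
    rcases dirStep_cases hstep with h | h <;> subst h <;> simp <;> omega

/-- contiguity: a directed path staying in one row visits every intermediate column. -/
lemma rtg_row_seg {S : Set GArc} {r c2 : ℕ} :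
    ∀ u : ℕ × ℕ, Relation.ReflTransGen (dirStep S) u (r, c2) → u.1 = r →
      ∀ c, u.2 ≤ c → c ≤ c2 →
        Relation.ReflTransGen (dirStep S) u (r, c) ∧
        Relation.ReflTransGen (dirStep S) (r, c) (r, c2) := by
  intro u h
  induction h using Relation.ReflTransGen.head_induction_on with
  | refl =>
    intro _ c hc1 hc2
    have : c = c2 := le_antisymm hc2 hc1
    subst this
    exact ⟨Relation.ReflTransGen.refl, Relation.ReflTransGen.refl⟩
  | head hstep hrest ih =>
    rename_i z w
    intro hz c hc1 hc2
    rcases dirStep_cases hstep with h | h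
    · exfalso
      have := (rtg_mono hrest).1
      rw [h] at this
      simp at this
      omega
    · rcases Nat.eq_or_lt_of_le hc1 with heq | hlt
      · have hzc : z = (r, c) := Prod.ext hz heq
        refine ⟨?_, ?_⟩
        · rw [hzc]
        · rw [← hzc]
          exact Relation.ReflTransGen.head hstep hrest
      · have hw : w.1 = r := by rw [h]; exact hz
        have hw2 : w.2 ≤ c := by rw [h]; simpa using hlt
        obtain ⟨h1, h2⟩ := ih hw c hw2 hc2
        exact ⟨Relation.ReflTransGen.head hstep h1, h2⟩

/-- splitting a directed path at its downward step out of row `r`. -/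
lemma rtg_down_split {S : Set GArc} {v : ℕ × ℕ} {r : ℕ} :
    ∀ u : ℕ × ℕ, Relation.ReflTransGen (dirStep S) u v → u.1 ≤ r → r < v.1 →
      ∃ m, Relation.ReflTransGen (dirStep S) u (r, m) ∧
        dirStep S (r, m) (r + 1, m) ∧
        Relation.ReflTransGen (dirStep S) (r + 1, m) v := by
  intro u h
  induction h using Relation.ReflTransGen.head_induction_on with
  | refl => intro h1 h2; omega
  | head hstep hrest ih =>
    rename_i z w
    intro h1 h2
    rcases dirStep_cases hstep with h | h
    · rcases Nat.eq_or_lt_of_le h1 with heq | hlt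
      · have hz : z = (r, z.2) := Prod.ext heq rfl
        refine ⟨z.2, ?_, ?_, ?_⟩
        · rw [← hz]
        · rw [← hz]
          have hw : w = (r + 1, z.2) := by rw [h, heq]
          rwa [← hw]
        · have hw : w = (r + 1, z.2) := by rw [h, heq]
          rwa [← hw]
      · have hw : w.1 ≤ r := by rw [h]; simpa using hlt
        obtain ⟨m, h1', h2', h3'⟩ := ih hw h2
        exact ⟨m, Relation.ReflTransGen.head hstep h1', h2', h3'⟩
    · have hw : w.1 ≤ r := by rw [h]; exact h1
      obtain ⟨m, h1', h2', h3'⟩ := ih hw h2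
      exact ⟨m, Relation.ReflTransGen.head hstep h1', h2', h3'⟩

/-- crossing lemma: a path ending weakly right at row `l` that starts strictly left
of a path to `(l,i)` must cross it, giving a path `(0,κ') →* (l,i)`. -/
lemma cross {S : Set GArc} {l i i' κ' : ℕ}
    (hii : i ≤ i') :
    ∀ z : ℕ × ℕ, Relation.ReflTransGen (dirStep S) z (l, i) →
      ∀ m, m < z.2 →
        Relation.ReflTransGen (dirStep S) (0, κ') (z.1, m) →
        Relation.ReflTransGen (dirStep S) (z.1, m) (l, i') →
        Relation.ReflTransGen (dirStep S) (0, κ') (l, i) := by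
  intro z h
  induction h using Relation.ReflTransGen.head_induction_on with
  | refl =>
    intro m hm h1 h2
    have := rtg_row_seg (S := S) (l, m) h2 rfl i (le_of_lt hm) hii
    exact h1.trans this.1
  | head hstep hrest ih =>
    rename_i z w
    intro m hm h1 h2
    rcases dirStep_cases hstep with h | h
    · -- vertical step of q
      have hl1 : z.1 + 1 ≤ l := by
        have := (rtg_mono hrest).1; rw [h] at this; simpa using this
      obtain ⟨m', hA, hB, hC⟩ :=
        rtg_down_split (S := S) (r := z.1) (z.1, m) h2 (le_refl _) (by omega)
      rcases lt_or_ge m' z.2 with hlt | hle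
      · -- continue with new witness m'
        refine ih m' ?_ ?_ ?_
        · rw [h]; exact hlt
        · rw [h]
          exact (h1.trans hA).tail hB
        · rw [h]; exact hC
      · -- crossing: (z.1, z.2) is on the first path
        have hseg := rtg_row_seg (S := S) (z.1, m) hA rfl z.2 (le_of_lt hm) hle
        have hz : Relation.ReflTransGen (dirStep S) (0, κ') (z.1, z.2) := h1.trans hseg.1
        have heq : z = (z.1, z.2) := rfl
        exact hz.trans (heq ▸ Relation.ReflTransGen.head hstep hrest)
    · -- horizontal step of q
      refine ih m ?_ ?_ ?_
      · rw [h]; omega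
      · rw [h]; exact h1
      · rw [h]; exact h2

/-- In a spanning tree of the grid in which every vertex is accessible from row one,
the function `κ_l` is non-decreasing. -/
theorem kappa_monotone (L T : ℕ) (S : Set GArc)
    (htree : IsGridSpanningTree L T S) (hacc : Accessible L T S)
    (l i i' κ κ' : ℕ) (hl : l < L) (hi : i < T) (hi' : i' < T) (hii : i ≤ i')
    (hκ : IsLeast (kappaSet T S l i) κ) (hκ' : IsLeast (kappaSet T S l i') κ') :
    κ ≤ κ' := by
  by_contra hlt
  push_neg at hlt
  obtain ⟨hκ'T, hp⟩ := hκ'.1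
  obtain ⟨hκT, hq⟩ := hκ.1
  have : Relation.ReflTransGen (dirStep S) (0, κ') (l, i) :=
    cross hii (0, κ) hq κ' hlt Relation.ReflTransGen.refl hp
  have : κ ≤ κ' := hκ.2 ⟨hκ'T, this⟩
  omega
end

section
/- With the setup of a spanning tree T_f of the L-by-T grid accessible from row one, an arc a = (u,v) of T_f splitting it into T_{f,1} and T_{f,2}, call a vertex w of type 2A if w ∈ T_{f,2} and the directed tree path P from row one to w contains arc a. Then for each row l, if v_{l,i} and v_{l,j} are of type 2A with i < j, every v_{l,k} with i < k < j is also of type 2A. -/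
/-- Vertex `(l,i)` is of type 2A (w.r.t. the spanning tree `S` and removed tree arc `a₀`):
it lies in the component of the head of `a₀` after deleting `a₀`, and the directed tree
path from row one (starting at `v_{1,κ_l(i)}`) to `(l,i)` contains the arc `a₀`. -/
def Type2A (T' : ℕ) (S : Set GArc) (a₀ : GArc) (l i : ℕ) : Prop :=
  Relation.ReflTransGen (undirStep (S \ {a₀})) (gHead a₀) (l, i) ∧
    ∃ (κ n : ℕ) (p : ℕ → ℕ × ℕ), IsLeast (kappaSet T' S l i) κ ∧
      p 0 = (0, κ) ∧ p n = (l, i) ∧ (∀ s < n, dirStep S (p s) (p (s + 1))) ∧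
      ∃ s < n, gTail a₀ = p s ∧ gHead a₀ = p (s + 1)

private lemma dirStep_succ {S : Set GArc} {u w : ℕ × ℕ} (h : dirStep S u w) :
    w = (u.1 + 1, u.2) ∨ w = (u.1, u.2 + 1) := by
  obtain ⟨a, -, htl, hhd⟩ := h
  rcases a with ⟨b, x, y⟩
  cases b <;> simp [gTail, gHead] at htl hhd <;> subst htl <;> subst hhd <;> simp

private lemma path_sum {S : Set GArc} {n : ℕ} {p : ℕ → ℕ × ℕ}
    (hp : ∀ s < n, dirStep S (p s) (p (s + 1))) :
    ∀ s ≤ n, (p s).1 + (p s).2 = (p 0).1 + (p 0).2 + s := by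
  intro s
  induction s with
  | zero => intro _; simp
  | succ s ih =>
    intro hs
    have h1 := ih (by omega)
    rcases dirStep_succ (hp s (by omega)) with h | h <;> rw [h] <;> simp <;> omega

private lemma path_row_le {S : Set GArc} {n : ℕ} {p : ℕ → ℕ × ℕ}
    (hp : ∀ s < n, dirStep S (p s) (p (s + 1))) :
    ∀ s ≤ n, (p s).1 ≤ (p n).1 := by
  have key : ∀ t, ∀ s ≤ t, t ≤ n → (p s).1 ≤ (p t).1 := by
    intro t
    induction t with
    | zero => intro s hs _; rw [Nat.le_zero.mp hs]
    | succ t ih =>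
      intro s hs htn
      by_cases h : s = t + 1
      · subst h; exact le_rfl
      · have h1 : (p s).1 ≤ (p t).1 := ih s (by omega) (by omega)
        rcases dirStep_succ (hp t (by omega)) with h2 | h2 <;> rw [h2] <;> simp <;> omega
  exact fun s hs => key n s hs le_rfl

private lemma meet {S : Set GArc} {n m N : ℕ} {p q : ℕ → ℕ × ℕ}
    (hp : ∀ s < n, dirStep S (p s) (p (s + 1)))
    (hq : ∀ s < m, dirStep S (q s) (q (s + 1)))
    (hNn : N ≤ n) (hNm : N ≤ m)
    (hsum : (p 0).1 + (p 0).2 = (q 0).1 + (q 0).2)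
    (h0 : (p 0).2 < (q 0).2)
    (hN : (q N).2 ≤ (p N).2) :
    ∃ s ≤ N, p s = q s := by
  classical
  have hex : ∃ s, s ≤ N ∧ (q s).2 ≤ (p s).2 := ⟨N, le_rfl, hN⟩
  obtain ⟨hsN, hcol⟩ := Nat.find_spec hex
  set s := Nat.find hex with hsdef
  have hs0 : s ≠ 0 := by
    intro h
    rw [h] at hcol
    omega
  have hprev : ¬ (s - 1 ≤ N ∧ (q (s-1)).2 ≤ (p (s-1)).2) := Nat.find_min hex (by omega)
  have hprev' : (p (s-1)).2 < (q (s-1)).2 := by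
    by_contra h
    exact hprev ⟨by omega, by omega⟩
  have hps := dirStep_succ (hp (s-1) (by omega))
  have hqs := dirStep_succ (hq (s-1) (by omega))
  have hs1 : s - 1 + 1 = s := by omega
  rw [hs1] at hps hqs
  have hpc : (p s).2 ≤ (p (s-1)).2 + 1 := by rcases hps with h|h <;> rw [h] <;> simp
  have hqc : (q (s-1)).2 ≤ (q s).2 := by rcases hqs with h|h <;> rw [h] <;> simp
  have hcol' : (p s).2 = (q s).2 := by omega
  have h1 := path_sum hp s (by omega)
  have h2 := path_sum hq s (by omega)
  exact ⟨s, hsN, Prod.ext (by omega) hcol'⟩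

private lemma chain_rtg {α : Type*} {R : α → α → Prop} (f : ℕ → α) {a b : ℕ} (hab : a ≤ b)
    (h : ∀ s, a ≤ s → s < b → R (f s) (f (s + 1))) :
    Relation.ReflTransGen R (f a) (f b) := by
  induction b, hab using Nat.le_induction with
  | base => exact Relation.ReflTransGen.refl
  | succ b hab ih =>
    exact Relation.ReflTransGen.tail (ih (fun s h1 h2 => h s h1 (by omega))) (h b hab (by omega))

private lemma rtg_path {α : Type*} {R : α → α → Prop} {v w : α}
    (h : Relation.ReflTransGen R v w) :
    ∃ (n : ℕ) (p : ℕ → α), p 0 = v ∧ p n = w ∧ ∀ s < n, R (p s) (p (s + 1)) := by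
  induction h with
  | refl => exact ⟨0, fun _ => v, rfl, rfl, fun s hs => absurd hs (by omega)⟩
  | @tail b c hvb hbc ih =>
    obtain ⟨n, p, h0, hn, hs⟩ := ih
    refine ⟨n + 1, fun s => if s ≤ n then p s else c, by simp [h0], ?_, ?_⟩
    · have : ¬ (n + 1 ≤ n) := by omega
      simp [this]
    · intro s hsn
      by_cases hcase : s < n
      · have e1 : s ≤ n := by omega
        have e2 : s + 1 ≤ n := by omega
        simpa [e1, e2] using hs s hcase
      · have hsn' : s = n := by omega
        subst hsn'
        have e1 : ¬ (s + 1 ≤ s) := by omega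
        simp only [le_refl, if_pos, if_neg e1]
        rw [hn]; exact hbc

private lemma splice_type2A {T' : ℕ} {S : Set GArc} {a₀ : GArc} {l i' k : ℕ}
    {n₁ : ℕ} {p₁ : ℕ → ℕ × ℕ} {c : ℕ}
    (hI : IsLeast (kappaSet T' S l i') c)
    (hp₁ : ∀ s < n₁, dirStep S (p₁ s) (p₁ (s + 1)))
    (h01 : p₁ 0 = (0, c)) (hend1 : p₁ n₁ = (l, i'))
    {s₀ : ℕ} (hs₀ : s₀ < n₁) (ht : gTail a₀ = p₁ s₀) (hh : gHead a₀ = p₁ (s₀ + 1))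
    {n : ℕ} {q : ℕ → ℕ × ℕ} {m : ℕ}
    (hm : IsLeast (kappaSet T' S l k) m)
    (hq : ∀ s < n, dirStep S (q s) (q (s + 1)))
    (h0q : q 0 = (0, m)) (hendq : q n = (l, k))
    {u v : ℕ} (hu : u ≤ n) (hv1 : s₀ + 1 ≤ v) (hv2 : v ≤ n₁)
    (hshare : q u = p₁ v) :
    Type2A T' S a₀ l k := by
  have hcT : c < T' := hI.1.1
  have hmT : m < T' := hm.1.1
  -- first splice: a path from (0,m) to (l,i')
  set r : ℕ → ℕ × ℕ := fun s => if s ≤ u then q s else p₁ (s - u + v) with hrdef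
  have hr0 : r 0 = (0, m) := by simp [hrdef, h0q]
  have hrlen : r (u + (n₁ - v)) = (l, i') := by
    rcases eq_or_lt_of_le hv2 with hcase | hcase
    · have h1 : u + (n₁ - v) = u := by omega
      rw [h1]
      simp only [hrdef, if_pos (le_refl u)]
      rw [hshare, hcase, hend1]
    · have h1 : ¬ (u + (n₁ - v) ≤ u) := by omega
      simp only [hrdef, if_neg h1]
      have h2 : u + (n₁ - v) - u + v = n₁ := by omega
      rw [h2, hend1]
  have hrstep : ∀ s < u + (n₁ - v), dirStep S (r s) (r (s + 1)) := by
    intro s hs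
    rcases lt_trichotomy s u with h | h | h
    · have e1 : r s = q s := by simp only [hrdef]; rw [if_pos (by omega : s ≤ u)]
      have e2 : r (s+1) = q (s+1) := by simp only [hrdef]; rw [if_pos (by omega : s + 1 ≤ u)]
      rw [e1, e2]; exact hq s (by omega)
    · subst h
      have e1 : r s = q s := by simp only [hrdef]; rw [if_pos (le_refl s)]
      have e2 : r (s+1) = p₁ (v + 1) := by
        simp only [hrdef]; rw [if_neg (by omega : ¬ (s + 1 ≤ s))]
        congr 1
        omega
      rw [e1, e2, hshare]
      exact hp₁ v (by omega)
    · have e1 : r s = p₁ (s - u + v) := by simp only [hrdef]; rw [if_neg (by omega : ¬ (s ≤ u))]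
      have e2 : r (s+1) = p₁ (s - u + v + 1) := by
        simp only [hrdef]; rw [if_neg (by omega : ¬ (s + 1 ≤ u))]
        congr 1
        omega
      rw [e1, e2]
      exact hp₁ (s - u + v) (by omega)
  have hmem1 : m ∈ kappaSet T' S l i' := by
    refine ⟨hmT, ?_⟩
    have hch := chain_rtg r (Nat.zero_le (u + (n₁ - v))) (fun s _ hs => hrstep s hs)
    rwa [hr0, hrlen] at hch
  have hcm : c ≤ m := hI.2 hmem1
  -- second splice: a path from (0,c) to (l,k) through a₀
  set n' : ℕ := v + (n - u) with hn'def
  set r' : ℕ → ℕ × ℕ := fun s => if s ≤ v then p₁ s else q (s - v + u) with hr'def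
  have hr'0 : r' 0 = (0, c) := by simp [hr'def, h01]
  have hr'end : r' n' = (l, k) := by
    rcases eq_or_lt_of_le hu with hcase | hcase
    · have h1 : n' = v := by omega
      rw [h1]
      simp only [hr'def, if_pos (le_refl v)]
      rw [← hshare, hcase, hendq]
    · have h1 : ¬ (n' ≤ v) := by omega
      simp only [hr'def, if_neg h1]
      have h2 : n' - v + u = n := by omega
      rw [h2, hendq]
  have hr'step : ∀ s < n', dirStep S (r' s) (r' (s + 1)) := by
    intro s hs
    rcases lt_trichotomy s v with h | h | h
    · have e1 : r' s = p₁ s := by simp only [hr'def]; rw [if_pos (by omega : s ≤ v)]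
      have e2 : r' (s+1) = p₁ (s+1) := by simp only [hr'def]; rw [if_pos (by omega : s + 1 ≤ v)]
      rw [e1, e2]; exact hp₁ s (by omega)
    · subst h
      have e1 : r' s = p₁ s := by simp only [hr'def]; rw [if_pos (le_refl s)]
      have e2 : r' (s+1) = q (u + 1) := by
        simp only [hr'def]; rw [if_neg (by omega : ¬ (s + 1 ≤ s))]
        congr 1
        omega
      rw [e1, e2, ← hshare]
      exact hq u (by omega)
    · have e1 : r' s = q (s - v + u) := by simp only [hr'def]; rw [if_neg (by omega : ¬ (s ≤ v))]
      have e2 : r' (s+1) = q (s - v + u + 1) := by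
        simp only [hr'def]; rw [if_neg (by omega : ¬ (s + 1 ≤ v))]
        congr 1
        omega
      rw [e1, e2]
      exact hq (s - v + u) (by omega)
  have hmem2 : c ∈ kappaSet T' S l k := by
    refine ⟨hcT, ?_⟩
    have hch := chain_rtg r' (Nat.zero_le n') (fun s _ hs => hr'step s hs)
    rwa [hr'0, hr'end] at hch
  have hmc : m ≤ c := hm.2 hmem2
  have hce : c = m := le_antisymm hcm hmc
  -- facts about sums
  have hsum' := path_sum hr'step
  have hsum1 := path_sum hp₁
  have e0 : (p₁ 0).1 + (p₁ 0).2 = c := by rw [h01]; simp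
  have e0' : (r' 0).1 + (r' 0).2 = c := by rw [hr'0]; simp
  have etail : (gTail a₀).1 + (gTail a₀).2 = c + s₀ := by
    rw [ht]
    have := hsum1 s₀ (by omega)
    omega
  have er's₀ : r' s₀ = p₁ s₀ := by simp only [hr'def]; rw [if_pos (by omega : s₀ ≤ v)]
  have er's₁ : r' (s₀ + 1) = p₁ (s₀ + 1) := by simp only [hr'def]; rw [if_pos hv1]
  have hvn' : v ≤ n' := by omega
  -- component membership (A)
  have hA : Relation.ReflTransGen (undirStep (S \ {a₀})) (gHead a₀) (l, k) := by
    have hchain : Relation.ReflTransGen (undirStep (S \ {a₀})) (r' (s₀ + 1)) (r' n') := by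
      apply chain_rtg _ (by omega : s₀ + 1 ≤ n')
      intro s hs1 hs2
      obtain ⟨a, haS, h1, h2⟩ := hr'step s hs2
      have hne : a ≠ a₀ := by
        intro hEq
        subst hEq
        have hsums : (r' s).1 + (r' s).2 = c + s := by
          have := hsum' s (by omega)
          omega
        rw [h1] at etail
        omega
      exact ⟨a, ⟨haS, fun hmem => hne (by simpa using hmem)⟩, Or.inl ⟨h1, h2⟩⟩
    rw [er's₁, hr'end] at hchain
    rw [← hh] at hchain
    exact hchain
  refine ⟨hA, c, n', r', ?_, hr'0, hr'end, hr'step, s₀, by omega, ?_, ?_⟩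
  · rw [hce]; exact hm
  · rw [er's₀, ht]
  · rw [er's₁, hh]
/-- In each row, the type 2A vertices form an interval: if `v_{l,i}` and `v_{l,j}` are of
type 2A with `i < j`, then so is every `v_{l,k}` with `i < k < j`. -/
theorem type2A_interval (L T : ℕ) (S : Set GArc)
    (htree : IsGridSpanningTree L T S) (hacc : Accessible L T S)
    (a₀ : GArc) (ha₀ : a₀ ∈ S)
    (l i k j : ℕ) (hl : l < L) (hik : i < k) (hkj : k < j) (hj : j < T)
    (hi2A : Type2A T S a₀ l i) (hj2A : Type2A T S a₀ l j) :
    Type2A T S a₀ l k := by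
  classical
  obtain ⟨-, c, n₁, p₁, hI, h01, hend1, hstep1, s₀, hs₀, ht1, hh1⟩ := hi2A
  obtain ⟨-, c', n₂, p₂, hJ, h02, hend2, hstep2, s₁, hs₁, ht2, hh2⟩ := hj2A
  have hkT : k < T := lt_trans hkj hj
  obtain ⟨j', hj'T, hj'path⟩ := hacc l k hl hkT
  have hne : (kappaSet T S l k).Nonempty := ⟨j', hj'T, hj'path⟩
  have hm : IsLeast (kappaSet T S l k) (sInf (kappaSet T S l k)) :=
    ⟨Nat.sInf_mem hne, fun b hb => Nat.sInf_le hb⟩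
  set m := sInf (kappaSet T S l k) with hmdef
  obtain ⟨n, q, h0q, hendq, hq⟩ := rtg_path hm.1.2
  -- arithmetic facts
  have hsum1 := path_sum hstep1
  have hsum2 := path_sum hstep2
  have hsumq := path_sum hq
  have e01 : (p₁ 0).1 + (p₁ 0).2 = c := by rw [h01]; simp
  have e02 : (p₂ 0).1 + (p₂ 0).2 = c' := by rw [h02]; simp
  have e0q : (q 0).1 + (q 0).2 = m := by rw [h0q]; simp
  have en1 : c + n₁ = l + i := by
    have := hsum1 n₁ le_rfl
    rw [hend1] at this
    simp at this
    omega
  have en2 : c' + n₂ = l + j := by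
    have := hsum2 n₂ le_rfl
    rw [hend2] at this
    simp at this
    omega
  have enq : m + n = l + k := by
    have := hsumq n le_rfl
    rw [hendq] at this
    simp at this
    omega
  set σ := (gHead a₀).1 + (gHead a₀).2 with hσdef
  have eσ1 : σ = c + s₀ + 1 := by
    rw [hσdef, hh1]
    have := hsum1 (s₀ + 1) (by omega)
    omega
  have eσ2 : σ = c' + s₁ + 1 := by
    rw [hσdef, hh2]
    have := hsum2 (s₁ + 1) (by omega)
    omega
  have hrowq : ∀ s ≤ n, (q s).1 ≤ l := by
    intro s hs
    have := path_row_le hq s hs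
    rw [hendq] at this
    simpa using this
  have hrow2 : ∀ s ≤ n₂, (p₂ s).1 ≤ l := by
    intro s hs
    have := path_row_le hstep2 s hs
    rw [hend2] at this
    simpa using this
  rcases le_or_gt m σ with hmσ | hmσ
  · -- Case 1 : m ≤ σ
    set u₀ := σ - m with hu₀def
    have hu₀n : u₀ ≤ n := by omega
    have hsq0 : (q u₀).1 + (q u₀).2 = σ := by
      have := hsumq u₀ hu₀n
      omega
    rcases lt_trichotomy (q u₀).2 (gHead a₀).2 with hcol | hcol | hcol
    · -- Q is left of head at diag σ : meet with P₁ branch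
      have hmeet : ∃ s ≤ n₁ - (s₀ + 1),
          (fun s => q (u₀ + s)) s = (fun s => p₁ (s₀ + 1 + s)) s := by
        apply meet (n := n - u₀) (m := n₁ - (s₀ + 1))
        · exact fun s hs => hq (u₀ + s) (by omega)
        · exact fun s hs => hstep1 (s₀ + 1 + s) (by omega)
        · omega
        · omega
        · show (q u₀).1 + (q u₀).2 = (p₁ (s₀ + 1)).1 + (p₁ (s₀ + 1)).2
          have := hsum1 (s₀ + 1) (by omega)
          omega
        · show (q u₀).2 < (p₁ (s₀ + 1)).2
          rw [← hh1]
          exact hcol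
        · show (p₁ (s₀ + 1 + (n₁ - (s₀ + 1)))).2 ≤ (q (u₀ + (n₁ - (s₀ + 1)))).2
          rw [show s₀ + 1 + (n₁ - (s₀ + 1)) = n₁ by omega, hend1]
          have hle : u₀ + (n₁ - (s₀ + 1)) ≤ n := by omega
          have h1 := hsumq (u₀ + (n₁ - (s₀ + 1))) hle
          have h2 := hrowq (u₀ + (n₁ - (s₀ + 1))) hle
          simp only
          omega
      obtain ⟨s, hsle, heq⟩ := hmeet
      exact splice_type2A hI hstep1 h01 hend1 hs₀ ht1 hh1 hm hq h0q hendq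
        (by omega : u₀ + s ≤ n) (by omega : s₀ + 1 ≤ s₀ + 1 + s) (by omega : s₀ + 1 + s ≤ n₁) heq
    · -- Q passes through the head itself
      have hqh : q u₀ = p₁ (s₀ + 1) := by
        rw [← hh1]
        refine Prod.ext ?_ hcol
        omega
      exact splice_type2A hI hstep1 h01 hend1 hs₀ ht1 hh1 hm hq h0q hendq
        hu₀n le_rfl (by omega) hqh
    · -- Q is right of head at diag σ : meet with P₂ branch
      have hmeet : ∃ s ≤ n - u₀,
          (fun s => p₂ (s₁ + 1 + s)) s = (fun s => q (u₀ + s)) s := by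
        apply meet (n := n₂ - (s₁ + 1)) (m := n - u₀)
        · exact fun s hs => hstep2 (s₁ + 1 + s) (by omega)
        · exact fun s hs => hq (u₀ + s) (by omega)
        · omega
        · omega
        · show (p₂ (s₁ + 1)).1 + (p₂ (s₁ + 1)).2 = (q u₀).1 + (q u₀).2
          have := hsum2 (s₁ + 1) (by omega)
          omega
        · show (p₂ (s₁ + 1)).2 < (q u₀).2
          rw [← hh2]
          exact hcol
        · show (q (u₀ + (n - u₀))).2 ≤ (p₂ (s₁ + 1 + (n - u₀))).2
          rw [show u₀ + (n - u₀) = n by omega, hendq]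
          have hle : s₁ + 1 + (n - u₀) ≤ n₂ := by omega
          have h1 := hsum2 (s₁ + 1 + (n - u₀)) hle
          have h2 := hrow2 (s₁ + 1 + (n - u₀)) hle
          simp only
          omega
      obtain ⟨s, hsle, heq⟩ := hmeet
      exact splice_type2A hJ hstep2 h02 hend2 hs₁ ht2 hh2 hm hq h0q hendq
        (by omega : u₀ + s ≤ n) (by omega : s₁ + 1 ≤ s₁ + 1 + s) (by omega : s₁ + 1 + s ≤ n₂)
        heq.symm
  · -- Case 2 : σ < m
    set vB := s₁ + 1 + (m - σ) with hvBdef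
    have hvBn : vB ≤ n₂ := by omega
    have hsB : (p₂ vB).1 + (p₂ vB).2 = m := by
      have := hsum2 vB hvBn
      omega
    have hcolB : (p₂ vB).2 ≤ m := by omega
    rcases eq_or_lt_of_le hcolB with hcol | hcol
    · -- B passes through (0, m) = q 0
      have hqh : q 0 = p₂ vB := by
        rw [h0q]
        apply Prod.ext <;> simp <;> omega
      exact splice_type2A hJ hstep2 h02 hend2 hs₁ ht2 hh2 hm hq h0q hendq
        (Nat.zero_le n) (by omega) hvBn hqh
    · have hmeet : ∃ s ≤ n, (fun s => p₂ (vB + s)) s = q s := by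
        apply meet (n := n₂ - vB) (m := n)
        · exact fun s hs => hstep2 (vB + s) (by omega)
        · exact hq
        · omega
        · exact le_rfl
        · show (p₂ vB).1 + (p₂ vB).2 = (q 0).1 + (q 0).2
          omega
        · show (p₂ vB).2 < (q 0).2
          rw [h0q]
          exact hcol
        · show (q n).2 ≤ (p₂ (vB + n)).2
          rw [hendq]
          have hle : vB + n ≤ n₂ := by omega
          have h1 := hsum2 (vB + n) hle
          have h2 := hrow2 (vB + n) hle
          simp only
          omega
      obtain ⟨s, hsle, heq⟩ := hmeet
      exact splice_type2A hJ hstep2 h02 hend2 hs₁ ht2 hh2 hm hq h0q hendq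
        hsle (by omega : s₁ + 1 ≤ vB + s) (by omega : vB + s ≤ n₂) heq.symm
end

section
/- With the same setup (spanning tree T_f of the grid accessible from row one, arc a removed, type 1 = in T_{f,1}, type 2B = in T_{f,2} with tree path from row one not containing a), in any row l > 1 there do not exist four vertices v_{l,i}, v_{l,j}, v_{l,i'}, v_{l,j'} with i < j < i' < j' alternating between type 1 and type 2B. -/
/-- Vertex `(l,i)` is of type 1: it lies in the component of the tail of `a₀` after
deleting the tree arc `a₀`. -/
def Type1 (S : Set GArc) (a₀ : GArc) (l i : ℕ) : Prop :=
  Relation.ReflTransGen (undirStep (S \ {a₀})) (gTail a₀) (l, i)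

/-- Vertex `(l,i)` is of type 2B: it lies in the component of the head of `a₀` after
deleting `a₀`, and the directed tree path from row one to `(l,i)` does not contain `a₀`. -/
def Type2B (T' : ℕ) (S : Set GArc) (a₀ : GArc) (l i : ℕ) : Prop :=
  Relation.ReflTransGen (undirStep (S \ {a₀})) (gHead a₀) (l, i) ∧
    ∃ (κ n : ℕ) (p : ℕ → ℕ × ℕ), IsLeast (kappaSet T' S l i) κ ∧
      p 0 = (0, κ) ∧ p n = (l, i) ∧ (∀ s < n, dirStep S (p s) (p (s + 1))) ∧
      ¬ ∃ s < n, gTail a₀ = p s ∧ gHead a₀ = p (s + 1)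


open Classical

section Walks

variable {V : Type*} {R : V → V → Prop}

lemma exists_walk_of_rtg {u v : V} (h : Relation.ReflTransGen R u v) :
    ∃ (n : ℕ) (p : ℕ → V), p 0 = u ∧ p n = v ∧ ∀ s < n, R (p s) (p (s + 1)) := by
  induction h with
  | refl => exact ⟨0, fun _ => u, rfl, rfl, fun s hs => absurd hs (Nat.not_lt_zero s)⟩
  | @tail b c hub hbc ih =>
    obtain ⟨n, p, hp0, hpn, hstep⟩ := ih
    refine ⟨n + 1, fun s => if s ≤ n then p s else c, by simp [hp0], by simp, ?_⟩
    intro s hs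
    rcases Nat.lt_or_ge s n with h1 | h1
    · simp only [Nat.le_of_lt h1, Nat.succ_le_of_lt h1, if_pos]
      exact hstep s h1
    · have : s = n := Nat.le_antisymm (Nat.lt_succ_iff.mp hs) h1
      subst this
      simp only [le_refl, if_pos, Nat.not_le.mpr (Nat.lt_succ_self s), if_neg, hpn]
      simpa [hpn] using hbc

lemma rtg_of_walk {n : ℕ} {p : ℕ → V} (hstep : ∀ s < n, R (p s) (p (s + 1))) :
    ∀ t ≤ n, Relation.ReflTransGen R (p 0) (p t) := by
  intro t
  induction t with
  | zero => intro _; exact Relation.ReflTransGen.refl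
  | succ k ih =>
    intro hk
    exact Relation.ReflTransGen.tail (ih (Nat.le_of_succ_le hk)) (hstep k hk)

lemma rtg_of_walk_from {n : ℕ} {p : ℕ → V} (hstep : ∀ s < n, R (p s) (p (s + 1)))
    {s : ℕ} (hs : s ≤ n) : ∀ t, s ≤ t → t ≤ n → Relation.ReflTransGen R (p s) (p t) := by
  intro t
  induction t with
  | zero => intro h1 _; obtain rfl : s = 0 := Nat.le_zero.mp h1; exact .refl
  | succ k ih =>
    intro h1 h2
    rcases Nat.lt_or_ge s (k+1) with hlt | hge
    · exact Relation.ReflTransGen.tail (ih (Nat.lt_succ_iff.mp hlt) (Nat.le_of_succ_le h2))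
        (hstep k h2)
    · obtain rfl : s = k + 1 := Nat.le_antisymm h1 hge
      exact .refl

end Walks

section Cnt

variable {V : Type*}

/-- number of steps `s < n` of the walk `p` satisfying `f`. -/
noncomputable def cnt (p : ℕ → V) (f : V → V → Prop) : ℕ → ℕ
  | 0 => 0
  | n + 1 => cnt p f n + if f (p n) (p (n + 1)) then 1 else 0

lemma cnt_congr {p : ℕ → V} {f g : V → V → Prop} {n : ℕ}
    (h : ∀ s < n, f (p s) (p (s + 1)) ↔ g (p s) (p (s + 1))) :
    cnt p f n = cnt p g n := by
  induction n with
  | zero => rfl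
  | succ k ih =>
    have h1 := h k (Nat.lt_succ_self k)
    simp only [cnt, ih (fun s hs => h s (Nat.lt_succ_of_lt hs))]
    by_cases hf : f (p k) (p (k + 1))
    · rw [if_pos hf, if_pos (h1.mp hf)]
    · rw [if_neg hf, if_neg (fun hg => hf (h1.mpr hg))]

lemma cnt_split {p : ℕ → V} {h f g : V → V → Prop} {n : ℕ}
    (hiff : ∀ s < n, h (p s) (p (s + 1)) ↔ (f (p s) (p (s + 1)) ∨ g (p s) (p (s + 1))))
    (hdisj : ∀ s < n, ¬(f (p s) (p (s + 1)) ∧ g (p s) (p (s + 1)))) :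
    cnt p h n = cnt p f n + cnt p g n := by
  induction n with
  | zero => rfl
  | succ k ih =>
    have h1 := hiff k (Nat.lt_succ_self k)
    have h2 := hdisj k (Nat.lt_succ_self k)
    simp only [cnt, ih (fun s hs => hiff s (Nat.lt_succ_of_lt hs))
      (fun s hs => hdisj s (Nat.lt_succ_of_lt hs))]
    by_cases hf : f (p k) (p (k + 1)) <;> by_cases hg : g (p k) (p (k + 1))
    · exact absurd ⟨hf, hg⟩ h2
    · rw [if_pos hf, if_neg hg, if_pos (h1.mpr (Or.inl hf))]; omega
    · rw [if_neg hf, if_pos hg, if_pos (h1.mpr (Or.inr hg))]; omega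
    · rw [if_neg hf, if_neg hg, if_neg (fun hh => (h1.mp hh).elim hf hg)]; omega

lemma cnt_toggle_even {p : ℕ → V} (I : V → Prop) (n : ℕ) :
    (Even (cnt p (fun x y => ¬(I x ↔ I y)) n) ↔ (I (p 0) ↔ I (p n))) := by
  induction n with
  | zero => simp [cnt]
  | succ k ih =>
    simp only [cnt]
    by_cases h : ¬(I (p k) ↔ I (p (k + 1)))
    · rw [if_pos h, Nat.even_add_one, ih]
      tauto
    · rw [if_neg h, Nat.add_zero, ih]
      push_neg at h
      tauto

end Cnt
section Parity

/-- unit adjacency in the grid -/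
def unitAdj (x y : ℕ × ℕ) : Prop :=
  (y.1 = x.1 + 1 ∧ y.2 = x.2) ∨ (y.1 = x.1 ∧ y.2 = x.2 + 1) ∨
  (x.1 = y.1 + 1 ∧ x.2 = y.2) ∨ (x.1 = y.1 ∧ x.2 = y.2 + 1)

lemma unitAdj_symm {x y : ℕ × ℕ} (h : unitAdj x y) : unitAdj y x := by
  unfold unitAdj at *; tauto

/-- step crosses the downward ray hanging from just below-left of `v` -/
def hcross (v : ℕ × ℕ) (x y : ℕ × ℕ) : Prop :=
  x.1 = y.1 ∧ v.1 ≤ x.1 ∧ ((x.2 + 1 = v.2 ∧ y.2 = v.2) ∨ (y.2 + 1 = v.2 ∧ x.2 = v.2))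

noncomputable def wP (p : ℕ → ℕ × ℕ) (n : ℕ) (v : ℕ × ℕ) : ℕ := cnt p (hcross v) n

variable {p : ℕ → ℕ × ℕ} {n : ℕ}

/-- vertical neighbours off the walk have the same crossing count. -/
lemma wP_vert (hadj : ∀ s < n, unitAdj (p s) (p (s + 1))) {r c : ℕ}
    (hv : ∀ s ≤ n, p s ≠ (r, c)) :
    wP p n (r, c) = wP p n (r + 1, c) := by
  apply cnt_congr
  intro s hs
  constructor
  · rintro ⟨h1, h2, h3⟩
    refine ⟨h1, ?_, h3⟩
    rcases Nat.lt_or_ge r (p s).1 with h | h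
    · omega
    · -- then (p s).1 = r, and one endpoint is (r,c): contradiction
      exfalso
      have hr : (p s).1 = r := le_antisymm h h2
      rcases h3 with ⟨h4, h5⟩ | ⟨h4, h5⟩
      · exact hv (s+1) hs (Prod.ext (by omega) h5)
      · exact hv s (le_of_lt hs) (Prod.ext hr h5)
  · rintro ⟨h1, h2, h3⟩
    exact ⟨h1, by omega, h3⟩

/-- horizontal neighbours off the walk (whose endpoints are in row 0) have
crossing counts of the same parity. -/
lemma wP_horiz (hadj : ∀ s < n, unitAdj (p s) (p (s + 1)))
    (h0 : (p 0).1 = 0) (hn : (p n).1 = 0) {r c : ℕ}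
    (hv : ∀ s ≤ n, p s ≠ (r, c)) (hv' : ∀ s ≤ n, p s ≠ (r, c + 1)) :
    (Even (wP p n (r, c)) ↔ Even (wP p n (r, c + 1))) := by
  set I : ℕ × ℕ → Prop := fun x => x.2 = c ∧ r ≤ x.1 with hI
  have hsplit : cnt p (fun x y => ¬(I x ↔ I y)) n
      = cnt p (hcross (r, c)) n + cnt p (hcross (r, c + 1)) n := by
    apply cnt_split
    · intro s hs
      have ha := hadj s hs
      constructor
      · intro htog
        -- case on the step shape
        rcases ha with ⟨h1, h2⟩ | ⟨h1, h2⟩ | ⟨h1, h2⟩ | ⟨h1, h2⟩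
        · -- down step: columns equal; toggle only possible at col c crossing row r
          exfalso
          rcases Nat.lt_or_ge (p s).1 r with hlt | hge
          · -- both rows < r unless (p (s+1)).1 = r
            by_cases hc : (p s).2 = c
            · have : (p (s+1)).1 = r := by
                by_contra hne
                exact htog (by simp [hI, h2, hc]; omega)
              exact hv (s+1) hs (Prod.ext this (by omega))
            · exact htog (by simp [hI, h2, hc])
          · exact htog (by simp [hI, h2]; omega)
        · -- right step
          by_cases hrow : r ≤ (p s).1
          · -- toggle iff cols straddle c or c+1
            by_cases hc : (p s).2 + 1 = c ∧ (p (s+1)).2 = c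
            · exact Or.inl ⟨by omega, hrow, Or.inl hc⟩
            · have hc2 : (p s).2 = c ∧ (p (s+1)).2 = c + 1 := by
                by_contra hcc
                exact htog (by simp only [hI]; omega)
              exact Or.inr ⟨by omega, by omega, Or.inl ⟨by omega, hc2.2⟩⟩
          · exact absurd (by simp only [hI]; omega : (I (p s) ↔ I (p (s+1)))) htog
        · -- up step (x = y + down): columns equal
          exfalso
          rcases Nat.lt_or_ge (p (s+1)).1 r with hlt | hge
          · by_cases hc : (p s).2 = c
            · have : (p s).1 = r := by
                by_contra hne
                exact htog (by simp only [hI]; omega)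
              exact hv s (le_of_lt hs) (Prod.ext this (by omega))
            · exact htog (by simp only [hI]; omega)
          · exact htog (by simp only [hI]; omega)
        · -- left step
          by_cases hrow : r ≤ (p s).1
          · by_cases hc : (p (s+1)).2 + 1 = c ∧ (p s).2 = c
            · exact Or.inl ⟨by omega, hrow, Or.inr hc⟩
            · have hc2 : (p (s+1)).2 = c ∧ (p s).2 = c + 1 := by
                by_contra hcc
                exact htog (by simp only [hI]; omega)
              exact Or.inr ⟨by omega, hrow, Or.inr ⟨by omega, hc2.2⟩⟩
          · exact absurd (by simp only [hI]; omega : (I (p s) ↔ I (p (s+1)))) htog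
      · rintro (⟨h1, h2, h3⟩ | ⟨h1, h2, h3⟩) htog <;>
        · simp only [hI] at htog
          omega
    · rintro s hs ⟨⟨h1, h2, h3⟩, ⟨h4, h5, h6⟩⟩
      rcases h3 with ⟨a1, a2⟩ | ⟨a1, a2⟩ <;> rcases h6 with ⟨b1, b2⟩ | ⟨b1, b2⟩ <;> omega
  have htogeven : Even (cnt p (fun x y => ¬(I x ↔ I y)) n) := by
    rw [cnt_toggle_even I n]
    have hI0 : ¬ I (p 0) := by
      rintro ⟨hc, hr⟩
      exact hv 0 (Nat.zero_le n) (Prod.ext (by omega) hc)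
    have hIn : ¬ I (p n) := by
      rintro ⟨hc, hr⟩
      exact hv n le_rfl (Prod.ext (by omega) hc)
    tauto
  rw [hsplit] at htogeven
  unfold wP
  rcases Nat.even_add.mp htogeven with h
  tauto

end Parity
section Row0

variable {p : ℕ → ℕ × ℕ} {n : ℕ}

/-- crossing count at a row-0 vertex: parity determined by endpoints' columns. -/
lemma wP_row0 (hadj : ∀ s < n, unitAdj (p s) (p (s + 1))) (γ : ℕ) :
    (Even (wP p n (0, γ)) ↔ ((γ ≤ (p 0).2) ↔ (γ ≤ (p n).2))) := by
  set J : ℕ × ℕ → Prop := fun x => γ ≤ x.2 with hJ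
  have : wP p n (0, γ) = cnt p (fun x y => ¬(J x ↔ J y)) n := by
    apply cnt_congr
    intro s hs
    have ha := hadj s hs
    unfold hcross
    simp only [hJ]
    unfold unitAdj at ha
    omega
  rw [this, cnt_toggle_even]

/-- Two vertex-disjoint grid walks whose endpoints interleave in row 0
cannot both exist. -/
lemma no_disjoint_interleaved (q : ℕ → ℕ × ℕ) (m : ℕ) (x₁ x₂ x₃ x₄ : ℕ)
    (hadjp : ∀ s < n, unitAdj (p s) (p (s + 1)))
    (hadjq : ∀ t < m, unitAdj (q t) (q (t + 1)))
    (hp0 : p 0 = (0, x₁)) (hpn : p n = (0, x₃))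
    (hq0 : q 0 = (0, x₂)) (hqm : q m = (0, x₄))
    (h12 : x₁ < x₂) (h23 : x₂ < x₃) (h34 : x₃ < x₄)
    (hdisj : ∀ s ≤ n, ∀ t ≤ m, p s ≠ q t) : False := by
  -- parity of wP is constant along q
  have hconst : ∀ t ≤ m, (Even (wP p n (q t)) ↔ Even (wP p n (q 0))) := by
    intro t
    induction t with
    | zero => intro _; rfl
    | succ k ih =>
      intro hk
      have hk' : k ≤ m := Nat.le_of_succ_le hk
      have hvk : ∀ s ≤ n, p s ≠ q k := fun s hs => hdisj s hs k hk'
      have hvk1 : ∀ s ≤ n, p s ≠ q (k + 1) := fun s hs => hdisj s hs (k+1) hk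
      have step : ∀ (v v' : ℕ × ℕ), unitAdj v v' → (∀ s ≤ n, p s ≠ v) →
          (∀ s ≤ n, p s ≠ v') → (Even (wP p n v) ↔ Even (wP p n v')) := by
        rintro ⟨r, c⟩ ⟨r', c'⟩ ha hv hv'
        rcases ha with ⟨h1, h2⟩ | ⟨h1, h2⟩ | ⟨h1, h2⟩ | ⟨h1, h2⟩ <;> simp only at h1 h2
        · obtain rfl : r' = r + 1 := h1; obtain rfl : c' = c := h2
          rw [wP_vert hadjp hv]
        · obtain rfl : r' = r := h1; obtain rfl : c' = c + 1 := h2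
          exact wP_horiz hadjp (by rw [hp0]) (by rw [hpn]) hv hv'
        · obtain rfl : r = r' + 1 := h1; obtain rfl : c = c' := h2
          rw [wP_vert hadjp hv']
        · obtain rfl : r = r' := h1; obtain rfl : c = c' + 1 := h2
          exact (wP_horiz hadjp (by rw [hp0]) (by rw [hpn]) hv' hv).symm
      exact (step (q k) (q (k+1)) (hadjq k hk) hvk hvk1).symm.trans (ih hk')
  have h2v : Even (wP p n (0, x₂)) ↔ False := by
    rw [wP_row0 hadjp, hp0, hpn]
    show (x₂ ≤ x₁ ↔ x₂ ≤ x₃) ↔ False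
    simp only [iff_false]
    omega
  have h4v : Even (wP p n (0, x₄)) := by
    rw [wP_row0 hadjp, hp0, hpn]
    show x₄ ≤ x₁ ↔ x₄ ≤ x₃
    omega
  have := hconst m le_rfl
  rw [hqm, hq0] at this
  exact h2v.mp (this.mp h4v)
section Staircase

/-- a directed grid step: down or right -/
def dStep (x y : ℕ × ℕ) : Prop :=
  y = (x.1 + 1, x.2) ∨ y = (x.1, x.2 + 1)

variable {p q : ℕ → ℕ × ℕ} {n m : ℕ}

lemma dWalk_row_mono (hstep : ∀ s < n, dStep (p s) (p (s + 1))) :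
    ∀ s t, s ≤ t → t ≤ n → (p s).1 ≤ (p t).1 := by
  intro s t hst htn
  induction t with
  | zero => obtain rfl : s = 0 := Nat.le_zero.mp hst; exact le_rfl
  | succ k ih =>
    rcases Nat.lt_or_ge s (k + 1) with h | h
    · have h2 : (p k).1 ≤ (p (k+1)).1 := by
        rcases hstep k htn with h3 | h3 <;> rw [h3] <;> simp <;> omega
      exact le_trans (ih (Nat.lt_succ_iff.mp h) (Nat.le_of_succ_le htn)) h2
    · obtain rfl : s = k + 1 := le_antisymm hst h
      exact le_rfl

lemma dWalk_col_mono (hstep : ∀ s < n, dStep (p s) (p (s + 1))) :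
    ∀ s t, s ≤ t → t ≤ n → (p s).2 ≤ (p t).2 := by
  intro s t hst htn
  induction t with
  | zero => obtain rfl : s = 0 := Nat.le_zero.mp hst; exact le_rfl
  | succ k ih =>
    rcases Nat.lt_or_ge s (k + 1) with h | h
    · have h2 : (p k).2 ≤ (p (k+1)).2 := by
        rcases hstep k htn with h3 | h3 <;> rw [h3] <;> simp <;> omega
      exact le_trans (ih (Nat.lt_succ_iff.mp h) (Nat.le_of_succ_le htn)) h2
    · obtain rfl : s = k + 1 := le_antisymm hst h
      exact le_rfl

/-- discrete IVT for rows -/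
lemma dWalk_row_ivt (hstep : ∀ s < n, dStep (p s) (p (s + 1))) :
    ∀ r, (p 0).1 ≤ r → r ≤ (p n).1 → ∃ s ≤ n, (p s).1 = r := by
  induction n with
  | zero => intro r h1 h2; exact ⟨0, le_rfl, le_antisymm h1 h2⟩
  | succ k ih =>
    intro r h1 h2
    have hstep' : ∀ s < k, dStep (p s) (p (s + 1)) := fun s hs => hstep s (Nat.lt_succ_of_lt hs)
    rcases le_or_gt r ((p k).1) with h | h
    · obtain ⟨s, hs, hsr⟩ := ih hstep' r h1 h
      exact ⟨s, Nat.le_succ_of_le hs, hsr⟩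
    · have : (p (k+1)).1 ≤ (p k).1 + 1 := by
        rcases hstep k (Nat.lt_succ_self k) with h3 | h3 <;> rw [h3] <;> simp
      exact ⟨k + 1, le_rfl, by omega⟩

/-- Two vertex-disjoint monotone staircases from row 0 to row `l`:  if the first
ends strictly left of the second, then it also starts strictly left. -/
lemma staircase_cross {l : ℕ}
    (hp : ∀ s < n, dStep (p s) (p (s + 1))) (hq : ∀ t < m, dStep (q t) (q (t + 1)))
    (hp0 : (p 0).1 = 0) (hpn : (p n).1 = l) (hq0 : (q 0).1 = 0) (hqm : (q m).1 = l)
    (hBA : (q 0).2 ≤ (p 0).2) (hAB : (p n).2 < (q m).2) :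
    ∃ s ≤ n, ∃ t ≤ m, p s = q t := by
  by_contra hno
  push_neg at hno
  -- first-entry times of p into each row
  have hE : ∀ r ≤ l, ∃ s, s ≤ n ∧ (p s).1 = r := by
    intro r hr
    obtain ⟨s, h1, h2⟩ := dWalk_row_ivt hp r (by omega) (by omega)
    exact ⟨s, h1, h2⟩
  classical
  set fA : ℕ → ℕ := fun r => if h : r ≤ l then Nat.find (hE r h) else 0 with hfA
  have hfA_le : ∀ r ≤ l, fA r ≤ n := by
    intro r hr; rw [hfA]; simp only [dif_pos hr]; exact (Nat.find_spec (hE r hr)).1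
  have hfA_row : ∀ r (hr : r ≤ l), (p (fA r)).1 = r := by
    intro r hr; rw [hfA]; simp only [dif_pos hr]; exact (Nat.find_spec (hE r hr)).2
  have hfA_min : ∀ r (hr : r ≤ l), ∀ s < fA r, s ≤ n → (p s).1 ≠ r := by
    intro r hr s hs hsn
    rw [hfA] at hs; simp only [dif_pos hr] at hs
    intro hcon
    exact Nat.find_min (hE r hr) hs ⟨hsn, hcon⟩
  have hfA0 : fA 0 = 0 := by
    rw [hfA]; simp only [dif_pos (Nat.zero_le l)]
    rw [Nat.find_eq_zero]
    exact ⟨Nat.zero_le n, hp0⟩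
  -- entry columns are monotone
  have hmono : ∀ r, r < l → (p (fA r)).2 ≤ (p (fA (r + 1))).2 := by
    intro r hr
    have hr1 : r + 1 ≤ l := hr
    have h1 : fA (r + 1) ≠ 0 := by
      intro h
      have := hfA_row (r + 1) hr1
      rw [h, hp0] at this
      omega
    obtain ⟨s1, hs1⟩ : ∃ s1, fA (r + 1) = s1 + 1 := ⟨fA (r+1) - 1, by omega⟩
    have hs1n : s1 + 1 ≤ n := hs1 ▸ hfA_le (r + 1) hr1
    have hrow1 : (p (s1 + 1)).1 = r + 1 := hs1 ▸ hfA_row (r + 1) hr1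
    rw [hs1]
    have hs1row : (p s1).1 = r := by
      rcases hp s1 hs1n with h3 | h3 <;> rw [h3] at hrow1 <;> simp at hrow1
      · omega
      · -- right step: row unchanged, so (p s1).1 = r + 1 contradicting minimality
        exfalso
        exact hfA_min (r + 1) hr1 s1 (by omega) (by omega) hrow1
    have hscol : (p (s1 + 1)).2 = (p s1).2 := by
      rcases hp s1 hs1n with h3 | h3
      · rw [h3]
      · exfalso
        rw [h3] at hrow1; simp at hrow1
        omega
    have hge : fA r ≤ s1 := by
      by_contra hcon
      have := hfA_min r (le_of_lt hr) s1 (by omega) (by omega)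
      exact this hs1row
    calc (p (fA r)).2 ≤ (p s1).2 := dWalk_col_mono hp _ _ hge (by omega)
      _ = (p (s1 + 1)).2 := hscol.symm
  have hmono' : ∀ r r', r ≤ r' → r' ≤ l → (p (fA r)).2 ≤ (p (fA r')).2 := by
    intro r r' hrr hrl
    induction r' with
    | zero => obtain rfl : r = 0 := Nat.le_zero.mp hrr; exact le_rfl
    | succ k ih =>
      rcases Nat.lt_or_ge r (k + 1) with h | h
      · exact le_trans (ih (Nat.lt_succ_iff.mp h) (by omega)) (hmono k (by omega))
      · obtain rfl : r = k + 1 := le_antisymm hrr h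
        exact le_rfl
  -- q's rows stay ≤ l
  have hqrow : ∀ t ≤ m, (q t).1 ≤ l := by
    intro t ht
    have := dWalk_row_mono hq t m ht le_rfl
    omega
  -- main induction: q stays strictly left of p's entry column in its row
  have main : ∀ t ≤ m, (q t).2 < (p (fA (q t).1)).2 := by
    intro t
    induction t with
    | zero =>
      intro _
      rw [hq0, hfA0]
      rcases Nat.lt_or_ge (q 0).2 (p 0).2 with h | h
      · exact h
      · exfalso
        have hc : (q 0).2 = (p 0).2 := le_antisymm hBA h
        exact hno 0 (Nat.zero_le n) 0 (Nat.zero_le m) (Prod.ext (by rw [hp0, hq0]) hc.symm)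
    | succ k ih =>
      intro hk
      have hk' : k ≤ m := Nat.le_of_succ_le hk
      have ihk := ih hk'
      have hrowk : (q k).1 ≤ l := hqrow k hk'
      rcases hq k hk with h3 | h3
      · -- down step
        have hrk1 : (q k).1 + 1 ≤ l := by
          have := hqrow (k+1) hk
          rw [h3] at this; simpa using this
        rw [h3]
        simp only
        calc (q k).2 < (p (fA (q k).1)).2 := ihk
          _ ≤ (p (fA ((q k).1 + 1))).2 := hmono (q k).1 (by omega)
      · -- right step
        rw [h3]
        simp only
        rcases Nat.lt_or_ge ((q k).2 + 1) ((p (fA (q k).1)).2) with h | h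
        · exact h
        · exfalso
          have hc : (q k).2 + 1 = (p (fA (q k).1)).2 := by omega
          have : p (fA (q k).1) = q (k + 1) := by
            refine Prod.ext ?_ ?_
            · rw [h3]; simp only; exact hfA_row (q k).1 hrowk
            · rw [h3]; simp only; omega
          exact hno (fA (q k).1) (hfA_le _ hrowk) (k+1) hk this
  have hfinal := main m le_rfl
  rw [hqm] at hfinal
  have : (p (fA l)).2 ≤ (p n).2 := dWalk_col_mono hp _ _ (hfA_le l le_rfl) le_rfl
  omega

end Staircase
section Tree

variable {V : Type*} {R : V → V → Prop}

lemma rtg_chain {u v : V} (h : Relation.ReflTransGen R u v) :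
    ∃ L : List V, L.Chain' R ∧ L.head? = some u ∧ L.getLast? = some v := by
  induction h with
  | refl => exact ⟨[u], List.isChain_singleton u, rfl, rfl⟩
  | @tail b c hub hbc ih =>
    obtain ⟨L, hch, hhd, hlast⟩ := ih
    refine ⟨L ++ [c], ?_, ?_, ?_⟩
    · rw [List.Chain', List.isChain_append]
      refine ⟨hch, List.isChain_singleton c, ?_⟩
      intro x hx y hy
      simp only [List.head?_cons] at hy
      rw [hlast] at hx
      simp only [Option.mem_def, Option.some.injEq] at hx hy
      cases hx
      cases hy
      exact hbc
    · cases L with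
      | nil => simp at hhd
      | cons a t => simpa using hhd
    · rw [List.getLast?_concat]

lemma chain_dedup : ∀ (N : ℕ) (L : List V), L.length ≤ N → L.Chain' R →
    ∃ L' : List V, L'.Chain' R ∧ L'.Nodup ∧ L'.head? = L.head? ∧
      L'.getLast? = L.getLast? ∧ L' ⊆ L := by
  intro N
  induction N with
  | zero =>
    intro L hL _
    obtain rfl : L = [] := List.eq_nil_of_length_eq_zero (Nat.le_zero.mp hL)
    exact ⟨[], List.isChain_nil, List.nodup_nil, rfl, rfl, fun _ h => h⟩
  | succ N ih =>
    intro L hL hch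
    cases L with
    | nil => exact ⟨[], List.isChain_nil, List.nodup_nil, rfl, rfl, fun _ h => h⟩
    | cons a t =>
      by_cases ha : a ∈ t
      · obtain ⟨s, u, rfl⟩ := List.append_of_mem ha
        have hsuf : (a :: u) <:+ (a :: (s ++ a :: u)) := by
          refine ⟨a :: s, ?_⟩
          simp
        have hch' : (a :: u).Chain' R := hch.suffix hsuf
        have hlen : (a :: u).length ≤ N := by
          simp only [List.length_cons, List.length_append] at hL ⊢
          omega
        obtain ⟨L', h1, h2, h3, h4, h5⟩ := ih (a :: u) hlen hch'
        refine ⟨L', h1, h2, by simpa using h3, ?_, ?_⟩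
        · rw [h4]
          rw [show a :: (s ++ a :: u) = (a :: s) ++ (a :: u) by simp]
          rw [List.getLast?_append_of_ne_nil _ (by simp)]
        · exact List.Subset.trans h5 (hsuf.subset)
      · have hch' : t.Chain' R := (List.isChain_cons.mp hch).2
        have hlen : t.length ≤ N := by simpa using hL
        obtain ⟨L', h1, h2, h3, h4, h5⟩ := ih t hlen hch'
        refine ⟨a :: L', ?_, ?_, by simp, ?_, ?_⟩
        · rw [List.Chain', List.isChain_cons]
          refine ⟨?_, h1⟩
          intro y hy
          rw [h3] at hy
          exact (List.isChain_cons.mp hch).1 y hy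
        · exact List.nodup_cons.mpr ⟨fun hmem => ha (h5 hmem), h2⟩
        · cases t with
          | nil =>
            cases L' with
            | nil => rfl
            | cons c w => simp at h4
          | cons b u =>
            cases L' with
            | nil => simp at h3
            | cons c w => rw [List.getLast?_cons_cons, h4, List.getLast?_cons_cons]
        · intro x hx
          rcases List.mem_cons.mp hx with rfl | hx
          · exact List.mem_cons_self
          · exact List.mem_cons_of_mem a (h5 hx)

end Tree
section Cycle

lemma gTail_ne_gHead (a : GArc) : gTail a ≠ gHead a := by
  rcases a with ⟨b, x, y⟩
  by_cases h : b <;> simp [gTail, gHead, h, Prod.ext_iff]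

lemma cycle_of_path {S : Set GArc} {a₀ : GArc} (ha₀ : a₀ ∈ S)
    (hpath : Relation.ReflTransGen (undirStep (S \ {a₀})) (gTail a₀) (gHead a₀)) :
    HasUndirCycle gTail gHead S := by
  classical
  obtain ⟨L0, hch0, hhd0, hlast0⟩ := rtg_chain hpath
  obtain ⟨L, hch, hnd, hhd, hlast, _⟩ := chain_dedup L0.length L0 le_rfl hch0
  rw [hhd0] at hhd
  rw [hlast0] at hlast
  -- L is nonempty with head gTail a₀ and last gHead a₀
  have hLne : L ≠ [] := by
    intro h; rw [h] at hhd; simp at hhd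
  have hlen2 : 2 ≤ L.length := by
    rcases L with _ | ⟨c, _ | ⟨d, w⟩⟩
    · simp at hhd
    · exfalso
      simp at hhd hlast
      first
      | exact (gTail_ne_gHead a₀) (hhd.symm.trans hlast)
      | exact (gTail_ne_gHead a₀) (hhd.trans hlast.symm)
      | exact (gTail_ne_gHead a₀) (hhd.symm.trans hlast.symm)
      | exact (gTail_ne_gHead a₀) (hhd.trans hlast)
    · simp only [List.length_cons]
      omega
  set k := L.length - 1 with hk
  have hk1 : 1 ≤ k := by omega
  have hLlen : L.length = k + 1 := by omega
  have hget0 : L.get ⟨0, by omega⟩ = gTail a₀ := by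
    rcases L with _ | ⟨c, w⟩
    · simp at hhd
    · first
      | · simp at hhd; exact hhd
      | · simp at hhd; exact hhd.symm
  have hgetk : L.get ⟨k, by omega⟩ = gHead a₀ := by
    have h1 := List.getLast?_eq_getLast_of_ne_nil hLne
    rw [hlast] at h1
    have h2 := List.getLast_eq_getElem hLne
    rw [h2] at h1
    simp only [List.get_eq_getElem, hk]
    exact (Option.some.inj h1).symm
  have hstep := List.isChain_iff_getElem.mp hch
  -- choose arcs
  have harc : ∀ i : Fin k, ∃ a : GArc, a ∈ S ∧ a ≠ a₀ ∧
      ((gTail a = L.get ⟨i, by omega⟩ ∧ gHead a = L.get ⟨i + 1, by omega⟩) ∨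
       (gTail a = L.get ⟨i + 1, by omega⟩ ∧ gHead a = L.get ⟨i, by omega⟩)) := by
    intro i
    have := hstep i (by omega)
    obtain ⟨a, haS, hor⟩ := this
    refine ⟨a, haS.1, by simpa using haS.2, ?_⟩
    rcases hor with ⟨h1, h2⟩ | ⟨h1, h2⟩
    · exact Or.inl ⟨h1, h2⟩
    · exact Or.inr ⟨h1, h2⟩
  choose e he1 he2 he3 using harc
  refine ⟨k + 1, ?_, ?_, ?_, ?_, ?_, ?_, ?_⟩
  · exact fun i => if h : (i : ℕ) < k then e ⟨i, h⟩ else a₀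
  · exact fun i => if h : (i : ℕ) < L.length then L.get ⟨i, h⟩ else L.get ⟨0, by omega⟩
  · omega
  · -- injectivity of arcs
    intro i j hij
    simp only at hij
    have hgetinj := List.nodup_iff_injective_get.mp hnd
    by_cases hi : (i : ℕ) < k <;> by_cases hj : (j : ℕ) < k
    · rw [dif_pos hi, dif_pos hj] at hij
      have o1 := he3 ⟨i, hi⟩
      have o2 := he3 ⟨j, hj⟩
      rw [hij] at o1
      have hne : ∀ (x y : ℕ) (hx : x < L.length) (hy : y < L.length),
          L.get ⟨x, hx⟩ = L.get ⟨y, hy⟩ → x = y := by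
        intro x y hx hy hxy
        exact congrArg Fin.val (hgetinj hxy)
      have hik : (i : ℕ) + 1 < L.length := by omega
      have hjk : (j : ℕ) + 1 < L.length := by omega
      rcases o1 with ⟨a1, a2⟩ | ⟨a1, a2⟩ <;> rcases o2 with ⟨b1, b2⟩ | ⟨b1, b2⟩
      · have e1 : (i : ℕ) = (j : ℕ) := hne _ _ (by omega) (by omega) (a1.symm.trans b1)
        exact Fin.ext e1
      · have e1 : (i : ℕ) = (j : ℕ) + 1 := hne _ _ (by omega) (by omega) (a1.symm.trans b1)
        have e2 : (i : ℕ) + 1 = (j : ℕ) := hne _ _ (by omega) (by omega) (a2.symm.trans b2)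
        omega
      · have e1 : (i : ℕ) + 1 = (j : ℕ) := hne _ _ (by omega) (by omega) (a1.symm.trans b1)
        have e2 : (i : ℕ) = (j : ℕ) + 1 := hne _ _ (by omega) (by omega) (a2.symm.trans b2)
        omega
      · have e1 : (i : ℕ) + 1 = (j : ℕ) + 1 := hne _ _ (by omega) (by omega) (a1.symm.trans b1)
        exact Fin.ext (by omega)
    · rw [dif_pos hi, dif_neg hj] at hij
      exact absurd hij (he2 ⟨i, hi⟩)
    · rw [dif_neg hi, dif_pos hj] at hij
      exact absurd hij.symm (he2 ⟨j, hj⟩)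
    · exact Fin.ext (by omega)
  · -- injectivity of vs ∘ castSucc
    intro i j hij
    simp only [Fin.coe_castSucc] at hij
    have hi : (i : ℕ) < L.length := by omega
    have hj : (j : ℕ) < L.length := by omega
    rw [dif_pos hi, dif_pos hj] at hij
    have h5 := congrArg Fin.val (List.nodup_iff_injective_get.mp hnd hij)
    exact Fin.ext h5
  · -- vs last = vs 0
    have h1 : ¬ ((Fin.last (k + 1) : Fin (k + 2)) : ℕ) < L.length := by
      simp [Fin.last]
      omega
    have h2 : ((0 : Fin (k + 2)) : ℕ) < L.length := by simp; omega
    rw [dif_neg h1, dif_pos h2]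
    congr 1
  · -- each arc is in S with correct incidences
    intro i
    by_cases hi : (i : ℕ) < k
    · have h1 : ((i.castSucc : Fin (k + 2)) : ℕ) < L.length := by
        simp [Fin.coe_castSucc]; omega
      have h2 : ((i.succ : Fin (k + 2)) : ℕ) < L.length := by
        simp [Fin.val_succ]; omega
      rw [dif_pos hi, dif_pos h1, dif_pos h2]
      refine ⟨he1 ⟨i, hi⟩, ?_⟩
      have := he3 ⟨i, hi⟩
      simp only [Fin.coe_castSucc, Fin.val_succ]
      rcases this with ⟨a1, a2⟩ | ⟨a1, a2⟩
      · exact Or.inl ⟨a1, a2⟩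
      · exact Or.inr ⟨a2, a1⟩
    · have hik : (i : ℕ) = k := by omega
      have h1 : ((i.castSucc : Fin (k + 2)) : ℕ) < L.length := by
        simp [Fin.coe_castSucc]; omega
      have h2 : ¬ ((i.succ : Fin (k + 2)) : ℕ) < L.length := by
        simp [Fin.val_succ]; omega
      rw [dif_neg hi, dif_pos h1, dif_neg h2]
      refine ⟨ha₀, Or.inr ⟨?_, ?_⟩⟩
      · have : L.get ⟨(i.castSucc : ℕ), h1⟩ = L.get ⟨k, by omega⟩ := by
          congr 1
          simp [Fin.coe_castSucc, hik]
        rw [this, hgetk]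
      · rw [hget0]
  
end Cycle
section Glue

lemma undirStep_symm {S : Set GArc} : Symmetric (undirStep S) := by
  rintro v w ⟨a, ha, h⟩
  exact ⟨a, ha, h.symm⟩

lemma unitAdj_tail_head (a : GArc) : unitAdj (gTail a) (gHead a) := by
  by_cases h : a.1 <;> simp [unitAdj, gTail, gHead, h]

lemma undirStep_unitAdj {S : Set GArc} {v w : ℕ × ℕ} (h : undirStep S v w) :
    unitAdj v w := by
  obtain ⟨a, _, h⟩ := h
  rcases h with ⟨h1, h2⟩ | ⟨h1, h2⟩
  · rw [← h1, ← h2]; exact unitAdj_tail_head a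
  · rw [← h1, ← h2]; exact unitAdj_symm (unitAdj_tail_head a)

lemma dirStep_dStep {S : Set GArc} {v w : ℕ × ℕ} (h : dirStep S v w) : dStep v w := by
  obtain ⟨a, _, h1, h2⟩ := h
  rw [← h1, ← h2]
  by_cases hb : a.1 <;> simp [dStep, gTail, gHead, hb]

/-- a directed staircase from row 0 to `(l,c)` all of whose vertices lie in the
component of `b` in `S'`. -/
def StairTo (S' : Set GArc) (b : ℕ × ℕ) (l c : ℕ) (p : ℕ → ℕ × ℕ) (n : ℕ) : Prop :=
  (p 0).1 = 0 ∧ p n = (l, c) ∧ (∀ s < n, dStep (p s) (p (s + 1))) ∧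
    ∀ s ≤ n, Relation.ReflTransGen (undirStep S') b (p s)

lemma stair_order {S' : Set GArc} {b b' : ℕ × ℕ} {l c c' : ℕ}
    {p q : ℕ → ℕ × ℕ} {n m : ℕ}
    (hp : StairTo S' b l c p n) (hq : StairTo S' b' l c' q m)
    (hsep : ∀ v, Relation.ReflTransGen (undirStep S') b v →
      Relation.ReflTransGen (undirStep S') b' v → False)
    (hcc : c < c') : (p 0).2 < (q 0).2 := by
  obtain ⟨hp0, hpn, hpstep, hpmem⟩ := hp
  obtain ⟨hq0, hqm, hqstep, hqmem⟩ := hq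
  by_contra hcon
  push_neg at hcon
  obtain ⟨s, hs, t, ht, hst⟩ := staircase_cross hpstep hqstep hp0 (by rw [hpn]) hq0
    (by rw [hqm]) hcon (by rw [hpn, hqm]; exact hcc)
  exact hsep (p s) (hpmem s hs) (hst ▸ hqmem t ht)

lemma alternation_core {S' : Set GArc} {b₁ b₂ : ℕ × ℕ}
    (hsep : ∀ v, Relation.ReflTransGen (undirStep S') b₁ v →
      Relation.ReflTransGen (undirStep S') b₂ v → False)
    {l c₁ c₂ c₃ c₄ : ℕ} (h12 : c₁ < c₂) (h23 : c₂ < c₃) (h34 : c₃ < c₄)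
    {p₁ p₂ p₃ p₄ : ℕ → ℕ × ℕ} {n₁ n₂ n₃ n₄ : ℕ}
    (H1 : StairTo S' b₁ l c₁ p₁ n₁) (H2 : StairTo S' b₂ l c₂ p₂ n₂)
    (H3 : StairTo S' b₁ l c₃ p₃ n₃) (H4 : StairTo S' b₂ l c₄ p₄ n₄) : False := by
  have hsep' : ∀ v, Relation.ReflTransGen (undirStep S') b₂ v →
      Relation.ReflTransGen (undirStep S') b₁ v → False := fun v h1 h2 => hsep v h2 h1
  have hx12 : (p₁ 0).2 < (p₂ 0).2 := stair_order H1 H2 hsep h12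
  have hx23 : (p₂ 0).2 < (p₃ 0).2 := stair_order H2 H3 hsep' h23
  have hx34 : (p₃ 0).2 < (p₄ 0).2 := stair_order H3 H4 hsep h34
  set x₁ := (p₁ 0).2
  set x₂ := (p₂ 0).2
  set x₃ := (p₃ 0).2
  set x₄ := (p₄ 0).2
  have hv1 : p₁ 0 = (0, x₁) := Prod.ext H1.1 rfl
  have hv2 : p₂ 0 = (0, x₂) := Prod.ext H2.1 rfl
  have hv3 : p₃ 0 = (0, x₃) := Prod.ext H3.1 rfl
  have hv4 : p₄ 0 = (0, x₄) := Prod.ext H4.1 rfl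
  have hsymm := (show Symmetric (Relation.ReflTransGen (undirStep S')) from fun _ _ h => (@Relation.ReflTransGen.symmetric _ (undirStep S') ⟨fun _ _ h => undirStep_symm h⟩).symm _ _ h)
  -- the tree path P from (0,x₁) to (0,x₃) inside the component of b₁
  have hP : Relation.ReflTransGen (undirStep S') ((0, x₁) : ℕ × ℕ) (0, x₃) := by
    have h1 := H1.2.2.2 0 (Nat.zero_le _)
    have h3 := H3.2.2.2 0 (Nat.zero_le _)
    rw [hv1] at h1
    rw [hv3] at h3
    exact (hsymm h1).trans h3
  have hQ : Relation.ReflTransGen (undirStep S') ((0, x₂) : ℕ × ℕ) (0, x₄) := by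
    have h1 := H2.2.2.2 0 (Nat.zero_le _)
    have h3 := H4.2.2.2 0 (Nat.zero_le _)
    rw [hv2] at h1
    rw [hv4] at h3
    exact (hsymm h1).trans h3
  obtain ⟨n, p, hp0, hpn, hpstep⟩ := exists_walk_of_rtg hP
  obtain ⟨m, q, hq0, hqm, hqstep⟩ := exists_walk_of_rtg hQ
  -- memberships
  have hPmem : ∀ s ≤ n, Relation.ReflTransGen (undirStep S') b₁ (p s) := by
    intro s hs
    have := rtg_of_walk hpstep s hs
    have hb1 : Relation.ReflTransGen (undirStep S') b₁ (p 0) := by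
      rw [hp0, ← hv1]
      exact H1.2.2.2 0 (Nat.zero_le _)
    exact hb1.trans this
  have hQmem : ∀ t ≤ m, Relation.ReflTransGen (undirStep S') b₂ (q t) := by
    intro t ht
    have := rtg_of_walk hqstep t ht
    have hb2 : Relation.ReflTransGen (undirStep S') b₂ (q 0) := by
      rw [hq0, ← hv2]
      exact H2.2.2.2 0 (Nat.zero_le _)
    exact hb2.trans this
  exact no_disjoint_interleaved q m x₁ x₂ x₃ x₄
    (fun s hs => undirStep_unitAdj (hpstep s hs))
    (fun t ht => undirStep_unitAdj (hqstep t ht))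
    hp0 hpn hq0 hqm hx12 hx23 hx34
    (fun s hs t ht hcon => hsep (p s) (hPmem s hs) (hcon ▸ hQmem t ht))

end Glue

/-- In any row `l > 1` (0-indexed: `l ≥ 1`), four vertices cannot alternate between
type 1 and type 2B. -/
theorem row_l_no_alternation_type1_type2B (L T : ℕ) (S : Set GArc)
    (htree : IsGridSpanningTree L T S) (hacc : Accessible L T S)
    (a₀ : GArc) (ha₀ : a₀ ∈ S)
    (l : ℕ) (hl0 : 1 ≤ l) (hl : l < L)
    (i j i' j' : ℕ) (h₁ : i < j) (h₂ : j < i') (h₃ : i' < j') (h₄ : j' < T) :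
    ¬ ((Type1 S a₀ l i ∧ Type2B T S a₀ l j ∧ Type1 S a₀ l i' ∧ Type2B T S a₀ l j') ∨
      (Type2B T S a₀ l i ∧ Type1 S a₀ l j ∧ Type2B T S a₀ l i' ∧ Type1 S a₀ l j')) := by
  obtain ⟨hvalid, hconn, hnocyc⟩ := htree
  set S' : Set GArc := S \ {a₀} with hS'
  -- the two components of the tree minus a₀ are disjoint
  have hsep : ∀ v, Relation.ReflTransGen (undirStep S') (gTail a₀) v →
      Relation.ReflTransGen (undirStep S') (gHead a₀) v → False := by
    intro v h1 h2
    have h2' := (show Symmetric (Relation.ReflTransGen (undirStep S')) from fun _ _ h => (@Relation.ReflTransGen.symmetric _ (undirStep S') ⟨fun _ _ h => undirStep_symm h⟩).symm _ _ h) h2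
    exact hnocyc (cycle_of_path ha₀ (h1.trans h2'))
  -- a type 2B vertex carries a staircase inside the head component
  have t2bStair : ∀ y, Type2B T S a₀ l y →
      ∃ (p : ℕ → ℕ × ℕ) (n : ℕ), StairTo S' (gHead a₀) l y p n := by
    rintro y ⟨hy1, κ, n, p, hκ, hp0, hpn, hstep, hnoa⟩
    have hstep' : ∀ s < n, undirStep S' (p s) (p (s + 1)) := by
      intro s hs
      obtain ⟨a, haS, h1, h2⟩ := hstep s hs
      refine ⟨a, ⟨haS, ?_⟩, Or.inl ⟨h1, h2⟩⟩
      intro hcon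
      rw [Set.mem_singleton_iff] at hcon
      subst hcon
      exact hnoa ⟨s, hs, h1, h2⟩
    refine ⟨p, n, by rw [hp0], hpn, fun s hs => dirStep_dStep (hstep s hs), ?_⟩
    intro s hs
    have hsm : Relation.ReflTransGen (undirStep S') (p s) (p n) :=
      rtg_of_walk_from hstep' hs n hs le_rfl
    have : Relation.ReflTransGen (undirStep S') (gHead a₀) (p n) := by
      rw [hpn]; exact hy1
    exact this.trans ((show Symmetric (Relation.ReflTransGen (undirStep S')) from fun _ _ h => (@Relation.ReflTransGen.symmetric _ (undirStep S') ⟨fun _ _ h => undirStep_symm h⟩).symm _ _ h) hsm)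
  -- a type 1 vertex carries a staircase inside the tail component
  have t1Stair : ∀ x, x < T → Type1 S a₀ l x →
      ∃ (p : ℕ → ℕ × ℕ) (n : ℕ), StairTo S' (gTail a₀) l x p n := by
    intro x hx hx1
    obtain ⟨t, ht, hrtg⟩ := hacc l x hl hx
    obtain ⟨n, p, hp0, hpn, hstep⟩ := exists_walk_of_rtg hrtg
    -- downward induction: each vertex reaches (l,x) in S', unless (l,x) is in
    -- the head component
    have hQ : ∀ d s, s + d = n →
        (Relation.ReflTransGen (undirStep S') (p s) ((l, x) : ℕ × ℕ) ∨
          Relation.ReflTransGen (undirStep S') (gHead a₀) ((l, x) : ℕ × ℕ)) := by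
      intro d
      induction d with
      | zero =>
        intro s hs
        obtain rfl : s = n := by omega
        rw [hpn]
        exact Or.inl Relation.ReflTransGen.refl
      | succ d ih =>
        intro s hs
        have hsn : s < n := by omega
        rcases ih (s + 1) (by omega) with hrtg1 | hC2
        · obtain ⟨a, haS, h1, h2⟩ := hstep s hsn
          by_cases hcon : a = a₀
          · subst hcon
            rw [← h2] at hrtg1
            exact Or.inr hrtg1
          · exact Or.inl (Relation.ReflTransGen.head
              ⟨a, ⟨haS, by simpa using hcon⟩, Or.inl ⟨h1, h2⟩⟩ hrtg1)
        · exact Or.inr hC2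
    have hnotC2 : ¬ Relation.ReflTransGen (undirStep S') (gHead a₀) ((l, x) : ℕ × ℕ) :=
      fun h => hsep (l, x) hx1 h
    have hall : ∀ s ≤ n, Relation.ReflTransGen (undirStep S') (p s) ((l, x) : ℕ × ℕ) := by
      intro s hs
      rcases hQ (n - s) s (by omega) with h | h
      · exact h
      · exact absurd h hnotC2
    refine ⟨p, n, by rw [hp0], hpn, fun s hs => dirStep_dStep (hstep s hs), ?_⟩
    intro s hs
    exact hx1.trans ((show Symmetric (Relation.ReflTransGen (undirStep S')) from fun _ _ h => (@Relation.ReflTransGen.symmetric _ (undirStep S') ⟨fun _ _ h => undirStep_symm h⟩).symm _ _ h) (hall s hs))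
  rintro (⟨hi, hj, hi', hj'⟩ | ⟨hi, hj, hi', hj'⟩)
  · obtain ⟨p₁, n₁, H1⟩ := t1Stair i (by omega) hi
    obtain ⟨p₂, n₂, H2⟩ := t2bStair j hj
    obtain ⟨p₃, n₃, H3⟩ := t1Stair i' (by omega) hi'
    obtain ⟨p₄, n₄, H4⟩ := t2bStair j' hj'
    exact alternation_core hsep h₁ h₂ h₃ H1 H2 H3 H4
  · obtain ⟨p₁, n₁, H1⟩ := t2bStair i hi
    obtain ⟨p₂, n₂, H2⟩ := t1Stair j (by omega) hj
    obtain ⟨p₃, n₃, H3⟩ := t2bStair i' hi'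
    obtain ⟨p₄, n₄, H4⟩ := t1Stair j' (by omega) hj'
    have hsep' : ∀ v, Relation.ReflTransGen (undirStep S') (gHead a₀) v →
        Relation.ReflTransGen (undirStep S') (gTail a₀) v → False :=
      fun v h1 h2 => hsep v h2 h1
    exact alternation_core hsep' h₁ h₂ h₃ H1 H2 H3 H4
end Row0
end

section
/- With the same setup, each row l of the grid contains at most two maximal intervals of type 2 vertices or at most two maximal intervals of type 1 vertices. -/
/-- The set of columns `t < T'` satisfying `P` decomposes into at most two maximal
intervals: equivalently, there is no in–out–in–out–in alternation pattern. -/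
def AtMostTwoIntervalsOn (T' : ℕ) (P : ℕ → Prop) : Prop :=
  ¬ ∃ t₁ t₂ t₃ t₄ t₅, t₁ < t₂ ∧ t₂ < t₃ ∧ t₃ < t₄ ∧ t₄ < t₅ ∧ t₅ < T' ∧
      P t₁ ∧ ¬ P t₂ ∧ P t₃ ∧ ¬ P t₄ ∧ P t₅

namespace GP
open Relation

lemma head_tail (a : GArc) :
    (gHead a = (a.2.1 + 1, a.2.2) ∧ gTail a = (a.2.1, a.2.2)) ∨
    (gHead a = (a.2.1, a.2.2 + 1) ∧ gTail a = (a.2.1, a.2.2)) := by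
  rcases a with ⟨b, l, t⟩
  cases b
  · right; simp [gHead, gTail]
  · left; simp [gHead, gTail]

lemma dirStep_fact {S : Set GArc} {v w : ℕ × ℕ} (h : dirStep S v w) :
    w.1 + w.2 = v.1 + v.2 + 1 ∧ v.1 ≤ w.1 ∧ v.2 ≤ w.2 ∧ w.1 ≤ v.1 + 1 ∧ w.2 ≤ v.2 + 1 := by
  obtain ⟨a, -, ht, hh⟩ := h
  subst ht; subst hh
  rcases head_tail a with ⟨h1, h2⟩ | ⟨h1, h2⟩ <;> rw [h1, h2] <;> simp <;> omega

lemma undirStep_fact {S : Set GArc} {v w : ℕ × ℕ} (h : undirStep S v w) :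
    (w.1 = v.1 ∧ (w.2 = v.2 + 1 ∨ v.2 = w.2 + 1)) ∨
    (w.2 = v.2 ∧ (w.1 = v.1 + 1 ∨ v.1 = w.1 + 1)) := by
  obtain ⟨a, ha, h | h⟩ := h <;>
  · obtain ⟨ht, hh⟩ := h
    rcases head_tail a with ⟨h1, h2⟩ | ⟨h1, h2⟩ <;>
      · rw [ht, hh] at *
        rw [Prod.ext_iff] at h1 h2; simp at h1 h2; omega

lemma undirStep_symm {S : Set GArc} {v w : ℕ × ℕ} (h : undirStep S v w) : undirStep S w v := by
  obtain ⟨a, ha, h⟩ := h; exact ⟨a, ha, h.symm⟩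

lemma reach_symm {S : Set GArc} {v w : ℕ × ℕ} (h : ReflTransGen (undirStep S) v w) :
    ReflTransGen (undirStep S) w v := by
  induction h with
  | refl => exact .refl
  | tail _ hbc ih => exact .head (undirStep_symm hbc) ih

lemma dir_to_undir {S : Set GArc} {v w : ℕ × ℕ} (h : dirStep S v w) : undirStep S v w := by
  obtain ⟨a, ha, h1, h2⟩ := h; exact ⟨a, ha, .inl ⟨h1, h2⟩⟩

lemma rtg_dir_undir {S : Set GArc} {v w : ℕ × ℕ} (h : ReflTransGen (dirStep S) v w) :
    ReflTransGen (undirStep S) v w := ReflTransGen.mono (fun _ _ => dir_to_undir) _ _ h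

lemma rtg_mono {S : Set GArc} {v w : ℕ × ℕ} (h : ReflTransGen (dirStep S) v w) :
    v.1 ≤ w.1 ∧ v.2 ≤ w.2 := by
  induction h with
  | refl => omega
  | tail _ hbc ih => have := dirStep_fact hbc; omega

/-- diagonal -/
def dg (v : ℕ × ℕ) : ℕ := v.1 + v.2

lemma rtg_dg_le {S : Set GArc} {v w : ℕ × ℕ} (h : ReflTransGen (dirStep S) v w) :
    dg v ≤ dg w := by
  induction h with
  | refl => omega
  | tail _ hbc ih => have := dirStep_fact hbc; unfold dg at *; omega

/-- parametrize a directed path by its anti-diagonals -/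
lemma exists_param {S : Set GArc} {v w : ℕ × ℕ} (h : ReflTransGen (dirStep S) v w) :
    ∃ f : ℕ → ℕ × ℕ, f (dg v) = v ∧ f (dg w) = w ∧
      (∀ d, dg v ≤ d → d < dg w → dirStep S (f d) (f (d + 1))) ∧
      (∀ d, dg v ≤ d → d ≤ dg w → dg (f d) = d) := by
  induction h with
  | refl =>
    exact ⟨fun _ => v, rfl, rfl, fun d h1 h2 => absurd h1 (by omega),
      fun d h1 h2 => by have : d = dg v := le_antisymm h2 h1; simp [this]⟩
  | @tail b c hab hbc ih =>
    obtain ⟨f, hfv, hfb, hstep, hdg⟩ := ih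
    have hd : dg c = dg b + 1 := by have := dirStep_fact hbc; unfold dg; omega
    have hvb : dg v ≤ dg b := rtg_dg_le hab
    refine ⟨fun d => if d = dg c then c else f d, ?_, ?_, ?_, ?_⟩
    · simp only [if_neg (by omega : dg v ≠ dg c)]; exact hfv
    · simp
    · intro d h1 h2
      rcases Nat.lt_or_ge d (dg b) with h3 | h3
      · simpa only [if_neg (by omega : d ≠ dg c), if_neg (by omega : d + 1 ≠ dg c)]
          using hstep d h1 h3
      · have hdb : d = dg b := by omega
        simp only []
        rw [if_neg (show ¬ d = dg c by omega), if_pos (show d + 1 = dg c by omega), hdb, hfb]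
        exact hbc
    · intro d h1 h2
      by_cases h3 : d = dg c
      · simp [h3]
      · simp only [if_neg h3]; exact hdg d h1 (by omega)

/-- recover a path from a parametrization -/
lemma param_rtg {S : Set GArc} {f : ℕ → ℕ × ℕ} {d₁ d₂ : ℕ}
    (hstep : ∀ d, d₁ ≤ d → d < d₂ → dirStep S (f d) (f (d + 1))) :
    ∀ a b, d₁ ≤ a → a ≤ b → b ≤ d₂ → ReflTransGen (dirStep S) (f a) (f b) := by
  have key : ∀ n a, d₁ ≤ a → a + n ≤ d₂ → ReflTransGen (dirStep S) (f a) (f (a + n)) := by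
    intro n
    induction n with
    | zero => intro a _ _; exact .refl
    | succ n ih =>
      intro a h1 h2
      exact .tail (ih a h1 (by omega)) (hstep (a + n) (by omega) (by omega))
  intro a b h1 h2 h3
  have := key (b - a) a h1 (by omega)
  simpa [Nat.add_sub_cancel' h2] using this

/-- discrete IVT -/
lemma ivt (g : ℕ → ℤ) (d₁ d₂ : ℕ) (h12 : d₁ ≤ d₂)
    (hstep : ∀ d, d₁ ≤ d → d < d₂ → (g (d + 1) - g d).natAbs ≤ 1)
    (h1 : g d₁ ≤ 0) (h2 : 0 ≤ g d₂) : ∃ d, d₁ ≤ d ∧ d ≤ d₂ ∧ g d = 0 := by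
  have key : ∀ n d₁, (∀ d, d₁ ≤ d → d < d₁ + n → (g (d + 1) - g d).natAbs ≤ 1) →
      g d₁ ≤ 0 → 0 ≤ g (d₁ + n) → ∃ d, d₁ ≤ d ∧ d ≤ d₁ + n ∧ g d = 0 := by
    intro n
    induction n with
    | zero => intro e hs hg1 hg2; exact ⟨e, le_refl _, le_refl _, le_antisymm hg1 hg2⟩
    | succ n ih =>
      intro e hs hg1 hg2
      by_cases hg : g (e + 1) ≤ 0
      · obtain ⟨d, hd1, hd2, hd3⟩ := ih (e + 1)
          (fun d h1' h2' => hs d (by omega) (by omega)) hg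
          (by rw [show e + 1 + n = e + (n + 1) by omega]; exact hg2)
        exact ⟨d, by omega, by omega, hd3⟩
      · have := hs e (le_refl _) (by omega)
        exact ⟨e, le_refl _, by omega, by omega⟩
  obtain ⟨n, rfl⟩ : ∃ n, d₂ = d₁ + n := ⟨d₂ - d₁, by omega⟩
  exact key n d₁ (fun d h1' h2' => hstep d h1' h2') h1 h2

/-- two vertex-disjoint monotone paths into row `l` from row 0: root order follows
column order -/
lemma cross_disjoint {S₁ S₂ : Set GArc} {m m' l x x' : ℕ}
    (hB : ReflTransGen (dirStep S₁) (0, m) (l, x))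
    (hB' : ReflTransGen (dirStep S₂) (0, m') (l, x'))
    (hxx : x < x')
    (hdisj : ∀ z : ℕ × ℕ,
      (ReflTransGen (dirStep S₁) (0, m) z ∧ ReflTransGen (dirStep S₁) z (l, x)) →
      (ReflTransGen (dirStep S₂) (0, m') z ∧ ReflTransGen (dirStep S₂) z (l, x')) → False) :
    m < m' := by
  by_contra hc
  push_neg at hc
  obtain ⟨f, hf1, hf2, hf3, hf4⟩ := exists_param hB
  obtain ⟨f', hg1, hg2, hg3, hg4⟩ := exists_param hB'
  have hdgm : dg (0, m) = m := by simp [dg]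
  have hdgm' : dg (0, m') = m' := by simp [dg]
  have hdgx : dg (l, x) = l + x := by simp [dg]
  have hdgx' : dg (l, x') = l + x' := by simp [dg]
  rw [hdgm] at hf1; rw [hdgx] at hf2; rw [hdgm, hdgx] at hf3; rw [hdgm, hdgx] at hf4
  rw [hdgm'] at hg1; rw [hdgx'] at hg2; rw [hdgm', hdgx'] at hg3; rw [hdgm', hdgx'] at hg4
  have hmx : m ≤ l + x := by have := rtg_dg_le hB; rw [hdgm, hdgx] at this; exact this
  -- g d = col f' d - col f d
  set g : ℕ → ℤ := fun d => ((f' d).2 : ℤ) - ((f d).2 : ℤ) with hgdef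
  have hstep : ∀ d, m ≤ d → d < l + x → (g (d + 1) - g d).natAbs ≤ 1 := by
    intro d h1 h2
    have s1 := dirStep_fact (hf3 d h1 h2)
    have s2 := dirStep_fact (hg3 d (by omega) (by omega))
    simp only [hgdef]; omega
  have h1 : g m ≤ 0 := by
    have hc1 : dg (f' m) = m := hg4 m (by omega) (by omega)
    have : (f' m).2 ≤ m := by unfold dg at hc1; omega
    simp only [hgdef, hf1]; omega
  have h2 : 0 ≤ g (l + x) := by
    have hc1 : dg (f' (l + x)) = l + x := hg4 (l + x) (by omega) (by omega)
    have hrow : (f' (l + x)).1 ≤ l := by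
      have := rtg_mono (param_rtg hg3 (l + x) (l + x') (by omega) (by omega) (le_refl _))
      rw [hg2] at this; exact this.1
    simp only [hgdef, hf2]; unfold dg at hc1; omega
  obtain ⟨d, hd1, hd2, hd3⟩ := ivt g m (l + x) hmx hstep h1 h2
  have hdd : f d = f' d := by
    have e1 : dg (f d) = d := hf4 d hd1 hd2
    have e2 : dg (f' d) = d := hg4 d (by omega) (by omega)
    simp only [hgdef] at hd3
    unfold dg at e1 e2
    have : (f d).2 = (f' d).2 := by omega
    have : (f d).1 = (f' d).1 := by omega
    exact Prod.ext this ‹(f d).2 = (f' d).2›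
  refine hdisj (f d) ⟨?_, ?_⟩ ⟨?_, ?_⟩
  · rw [← hf1]; exact param_rtg hf3 m d (le_refl _) hd1 hd2
  · rw [← hf2]; exact param_rtg hf3 d (l + x) hd1 hd2 (le_refl _)
  · rw [← hg1, hdd]; exact param_rtg hg3 m' d (le_refl _) (by omega) (by omega)
  · rw [← hg2, hdd]; exact param_rtg hg3 d (l + x') (by omega) (by omega) (by omega)

/-- a monotone path from row 0 to `(l,j)` must meet one of two monotone paths from `w`
to `(l,i)` and `(l,k)` when `i < j < k`. -/
lemma cross_meet {S' S₀ : Set GArc} {w : ℕ × ℕ} {l i j k m : ℕ}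
    (hQi : ReflTransGen (dirStep S') w (l, i))
    (hQk : ReflTransGen (dirStep S') w (l, k))
    (hB : ReflTransGen (dirStep S₀) (0, m) (l, j))
    (hij : i < j) (hjk : j < k) :
    ∃ z, ReflTransGen (dirStep S') w z ∧ ReflTransGen (dirStep S₀) z (l, j) := by
  obtain ⟨fB, b1, b2, b3, b4⟩ := exists_param hB
  have hdgm : dg (0, m) = m := by simp [dg]
  have hdgj : dg (l, j) = l + j := by simp [dg]
  rw [hdgm] at b1; rw [hdgj] at b2; rw [hdgm, hdgj] at b3; rw [hdgm, hdgj] at b4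
  have hmj : m ≤ l + j := by have := rtg_dg_le hB; rw [hdgm, hdgj] at this; exact this
  have hmm : m ≤ j := by have := (rtg_mono hB).2; exact this
  have hrowB : ∀ d, m ≤ d → d ≤ l + j → (fB d).1 ≤ l := by
    intro d h1 h2
    have := rtg_mono (param_rtg b3 d (l + j) h1 h2 (le_refl _))
    rw [b2] at this; exact this.1
  -- generic meet-extraction given a path from w to (l,y) with j relevant range
  have main : ∀ (y : ℕ) (hQ : ReflTransGen (dirStep S') w (l, y)) (d₁ : ℕ),
      m ≤ d₁ → dg w ≤ d₁ → d₁ ≤ l + y → d₁ ≤ l + j →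
      (∀ fQ : ℕ → ℕ × ℕ, fQ (dg w) = w → fQ (l + y) = (l, y) →
        (∀ d, dg w ≤ d → d < l + y → dirStep S' (fQ d) (fQ (d + 1))) →
        (∀ d, dg w ≤ d → d ≤ l + y → dg (fQ d) = d) →
        ((fB d₁).2 : ℤ) - ((fQ d₁).2 : ℤ) ≤ 0 ∧ 0 ≤ ((fB (min (l + y) (l + j))).2 : ℤ) - ((fQ (min (l + y) (l + j))).2 : ℤ) ∨
         0 ≤ ((fB d₁).2 : ℤ) - ((fQ d₁).2 : ℤ) ∧ ((fB (min (l + y) (l + j))).2 : ℤ) - ((fQ (min (l + y) (l + j))).2 : ℤ) ≤ 0) →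
      ∃ z, ReflTransGen (dirStep S') w z ∧ ReflTransGen (dirStep S₀) z (l, j) := by
    intro y hQ d₁ hmd hwd hdy hdj hsign
    obtain ⟨fQ, q1, q2, q3, q4⟩ := exists_param hQ
    have hdgy : dg (l, y) = l + y := by simp [dg]
    rw [hdgy] at q2; rw [hdgy] at q3; rw [hdgy] at q4
    set d₂ := min (l + y) (l + j) with hd₂
    have hd₂1 : d₁ ≤ d₂ := by omega
    have hsgn := hsign fQ q1 q2 q3 q4
    set g1 : ℕ → ℤ := fun d => ((fB d).2 : ℤ) - ((fQ d).2 : ℤ) with hg1def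
    set g2 : ℕ → ℤ := fun d => ((fQ d).2 : ℤ) - ((fB d).2 : ℤ) with hg2def
    have hstep : ∀ d, d₁ ≤ d → d < d₂ → (g1 (d + 1) - g1 d).natAbs ≤ 1 := by
      intro d h1 h2
      have s1 := dirStep_fact (b3 d (by omega) (by omega))
      have s2 := dirStep_fact (q3 d (by omega) (by omega))
      simp only [hg1def]; omega
    have hstep' : ∀ d, d₁ ≤ d → d < d₂ → (g2 (d + 1) - g2 d).natAbs ≤ 1 := by
      intro d h1 h2
      have s1 := dirStep_fact (b3 d (by omega) (by omega))
      have s2 := dirStep_fact (q3 d (by omega) (by omega))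
      simp only [hg2def]; omega
    have key : ∃ d, d₁ ≤ d ∧ d ≤ d₂ ∧ ((fB d).2 : ℤ) - ((fQ d).2 : ℤ) = 0 := by
      rcases hsgn with ⟨ha, hb⟩ | ⟨ha, hb⟩
      · exact ivt g1 d₁ d₂ hd₂1 hstep ha hb
      · obtain ⟨d, h1, h2, h3⟩ := ivt g2 d₁ d₂ hd₂1 hstep'
          (by simp only [hg2def]; omega) (by simp only [hg2def]; omega)
        exact ⟨d, h1, h2, by simp only [hg2def] at h3; omega⟩
    obtain ⟨d, hd1, hd2, hd3⟩ := key
    have e1 : dg (fB d) = d := b4 d (by omega) (by omega)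
    have e2 : dg (fQ d) = d := q4 d (by omega) (by omega)
    have hdd : fQ d = fB d := by
      unfold dg at e1 e2
      have h2' : (fQ d).2 = (fB d).2 := by omega
      exact Prod.ext (by omega) h2'
    refine ⟨fQ d, ?_, ?_⟩
    · rw [← q1]; exact param_rtg q3 (dg w) d (le_refl _) (by omega) (by omega)
    · rw [hdd, ← b2]; exact param_rtg b3 d (l + j) (by omega) (by omega) (le_refl _)
  have hwrow : w.1 ≤ l := by have := (rtg_mono hQi).1; exact this
  have hwcol : w.2 ≤ i := by have := (rtg_mono hQi).2; exact this
  have hwdg : dg w ≤ l + i := by unfold dg; omega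
  rcases Nat.lt_or_ge m (dg w) with hcase | hcase
  · -- m < dg w : start comparison at d₁ = dg w
    -- need column of fB at dg w
    obtain ⟨fB', b1', b2', b3', b4'⟩ := exists_param hB
    rcases Nat.lt_or_ge ((fB (dg w)).2) w.2 with hcol | hcol
    · -- pair with Qi on [dg w, l+i]
      refine main i hQi (dg w) (by omega) (le_refl _) (by omega) (by omega) ?_
      intro fQ q1 q2 q3 q4
      left
      constructor
      · rw [q1]; omega
      · have hmin : min (l + i) (l + j) = l + i := by omega
        rw [hmin, q2]
        have e1 : dg (fB (l + i)) = l + i := b4 (l + i) (by omega) (by omega)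
        have hrow := hrowB (l + i) (by omega) (by omega)
        unfold dg at e1; simp only []; omega
    · -- pair with Qk on [dg w, l+j]
      have hwk : dg w ≤ l + k := by unfold dg; omega
      refine main k hQk (dg w) (by omega) (le_refl _) (by omega) (by omega) ?_
      intro fQ q1 q2 q3 q4
      right
      constructor
      · rw [q1]; omega
      · have hmin : min (l + k) (l + j) = l + j := by omega
        rw [hmin, b2]
        have e2 : dg (fQ (l + j)) = l + j := q4 (l + j) (by omega) (by omega)
        have hrow : (fQ (l + j)).1 ≤ l := by
          have := rtg_mono (param_rtg q3 (l + j) (l + k) (by omega) (by omega) (by omega))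
          rw [q2] at this; exact this.1
        unfold dg at e2; simp only []; omega
  · -- dg w ≤ m : start comparison at d₁ = m, pair with Qk
    have hwk : dg w ≤ l + k := by unfold dg; omega
    refine main k hQk m (le_refl _) hcase (by omega) (by omega) ?_
    intro fQ q1 q2 q3 q4
    right
    constructor
    · rw [b1]
      have e2 : dg (fQ m) = m := q4 m hcase (by omega)
      unfold dg at e2; simp only []; omega
    · have hmin : min (l + k) (l + j) = l + j := by omega
      rw [hmin, b2]
      have e2 : dg (fQ (l + j)) = l + j := q4 (l + j) (by omega) (by omega)
      have hrow : (fQ (l + j)).1 ≤ l := by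
        have := rtg_mono (param_rtg q3 (l + j) (l + k) (by omega) (by omega) (by omega))
        rw [q2] at this; exact this.1
      unfold dg at e2; simp only []; omega

/-- removing an arc from a directed path -/
lemma remove_arc {S : Set GArc} {a₀ : GArc} {s v : ℕ × ℕ}
    (h : ReflTransGen (dirStep S) s v) :
    ReflTransGen (dirStep (S \ {a₀})) s v ∨
      ReflTransGen (dirStep (S \ {a₀})) (gHead a₀) v := by
  induction h with
  | refl => exact .inl .refl
  | @tail b c hab hbc ih =>
    obtain ⟨a, ha, ht, hh⟩ := hbc
    by_cases haa : a = a₀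
    · right
      subst haa
      exact hh ▸ .refl
    · have hstep : dirStep (S \ {a₀}) b c := ⟨a, ⟨ha, haa⟩, ht, hh⟩
      rcases ih with h' | h'
      · exact .inl (.tail h' hstep)
      · exact .inr (.tail h' hstep)

lemma chain_reach {r : ℕ × ℕ → ℕ × ℕ → Prop} :
    ∀ (L : List (ℕ × ℕ)) (x : ℕ × ℕ), List.Chain r x L → ∀ z ∈ x :: L, ReflTransGen r x z := by
  intro L
  induction L with
  | nil => intro x _ z hz; simp at hz; subst hz; exact .refl
  | cons y L ih =>
    intro x hc z hz
    replace hc := List.isChain_cons_cons.mp hc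
    rcases List.mem_cons.mp hz with rfl | hz'
    · exact .refl
    · exact .head hc.1 (ih y hc.2 z hz')

/-- components after arc removal, via classification of walks in `S` -/
lemma comp_cases {S : Set GArc} {a₀ : GArc} {x y : ℕ × ℕ}
    (hsep : ¬ ReflTransGen (undirStep (S \ {a₀})) (gHead a₀) (gTail a₀))
    (h : ReflTransGen (undirStep S) x y) :
    ReflTransGen (undirStep (S \ {a₀})) x y ∨
      (ReflTransGen (undirStep (S \ {a₀})) x (gTail a₀) ∧
        ReflTransGen (undirStep (S \ {a₀})) (gHead a₀) y) ∨
      (ReflTransGen (undirStep (S \ {a₀})) x (gHead a₀) ∧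
        ReflTransGen (undirStep (S \ {a₀})) (gTail a₀) y) := by
  induction h with
  | refl => exact .inl .refl
  | @tail b c hab hbc ih =>
    obtain ⟨a, ha, hor⟩ := hbc
    by_cases haa : a = a₀
    · subst haa
      rcases hor with ⟨ht, hh⟩ | ⟨ht, hh⟩
      · -- b = gTail a₀, c = gHead a₀
        subst ht; subst hh
        rcases ih with h' | ⟨h1, h2⟩ | ⟨h1, h2⟩
        · exact .inr (.inl ⟨h', .refl⟩)
        · exact absurd h2 hsep
        · exact .inl h1
      · -- b = gHead a₀, c = gTail a₀
        subst ht; subst hh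
        rcases ih with h' | ⟨h1, h2⟩ | ⟨h1, h2⟩
        · exact .inr (.inr ⟨h', .refl⟩)
        · exact .inl h1
        · exact absurd (reach_symm h2) hsep
    · have hstep : undirStep (S \ {a₀}) b c := ⟨a, ⟨ha, haa⟩, hor⟩
      rcases ih with h' | ⟨h1, h2⟩ | ⟨h1, h2⟩
      · exact .inl (.tail h' hstep)
      · exact .inr (.inl ⟨h1, .tail h2 hstep⟩)
      · exact .inr (.inr ⟨h1, .tail h2 hstep⟩)

lemma dg_head (a : GArc) : dg (gHead a) = dg (gTail a) + 1 := by
  rcases head_tail a with ⟨h1, h2⟩ | ⟨h1, h2⟩ <;> rw [h1, h2] <;> simp [dg] <;> try omega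

lemma undirStep_ne {S : Set GArc} {v w : ℕ × ℕ} (h : undirStep S v w) : v ≠ w := by
  intro he
  obtain ⟨a, -, ⟨h1, h2⟩ | ⟨h1, h2⟩⟩ := h <;>
    · have := dg_head a
      rw [h1, h2, he] at this; omega

lemma arc_eq_of_ends {a b : GArc} (ht : gTail a = gTail b) (hh : gHead a = gHead b) :
    a = b := by
  rcases a with ⟨ba, la, ta⟩; rcases b with ⟨bb, lb, tb⟩
  unfold gTail at ht
  simp only [Prod.mk.injEq] at ht
  obtain ⟨h1, h2⟩ := ht
  subst h1; subst h2
  unfold gHead at hh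
  cases ba <;> cases bb <;> simp_all <;> omega

lemma no_sep {S : Set GArc} {a₀ : GArc} (ha₀ : a₀ ∈ S)
    (hnc : ¬ HasUndirCycle gTail gHead S) :
    ¬ ReflTransGen (undirStep (S \ {a₀})) (gHead a₀) (gTail a₀) := by
  intro h
  classical
  set G : SimpleGraph (ℕ × ℕ) :=
    { Adj := fun x y => x ≠ y ∧ undirStep (S \ {a₀}) x y,
      symm := ⟨fun x y ⟨hne, hs⟩ => ⟨hne.symm, undirStep_symm hs⟩⟩,
      loopless := ⟨fun x ⟨hne, _⟩ => hne rfl⟩ } with hG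
  have hreach : G.Reachable (gHead a₀) (gTail a₀) := by
    rw [SimpleGraph.reachable_iff_reflTransGen]
    exact ReflTransGen.mono (fun x y hs => ⟨undirStep_ne hs, hs⟩) _ _ h
  obtain ⟨wlk⟩ := hreach
  set p := wlk.toPath with hp
  set L := p.1.support with hL
  have hnodup : L.Nodup := p.2.support_nodup
  have hchain : List.Chain' G.Adj L := p.1.isChain_adj_support
  have hne : L ≠ [] := p.1.support_ne_nil
  have hpos : 0 < L.length := List.length_pos_iff.mpr hne
  have hhead : L.head hne = gHead a₀ := p.1.head_support
  have hlast : L.getLast hne = gTail a₀ := p.1.getLast_support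
  have hstep : ∀ (i : ℕ) (hi : i + 1 < L.length),
      undirStep (S \ {a₀}) (L.get ⟨i, by omega⟩) (L.get ⟨i + 1, hi⟩) := by
    intro i hi
    have := List.isChain_iff_getElem.mp hchain i (by omega)
    exact this.2
  refine hnc ⟨L.length,
    (fun i => if hi : i.val + 1 < L.length then Classical.choose (hstep i.val hi) else a₀),
    (fun i => if hi : i.val < L.length then L.get ⟨i.val, hi⟩ else gHead a₀),
    hpos, ?_, ?_, ?_, ?_⟩
  · -- arcs injective
    intro i j heq
    simp only [] at heq
    have hgi : ∀ (x y : ℕ) (hx : x < L.length) (hy : y < L.length),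
        L.get ⟨x, hx⟩ = L.get ⟨y, hy⟩ → x = y := by
      intro x y hx hy hxy
      exact congrArg Fin.val ((hnodup.get_inj_iff).mp hxy)
    by_cases hi : i.val + 1 < L.length <;> by_cases hj : j.val + 1 < L.length
    · rw [dif_pos hi, dif_pos hj] at heq
      have si := Classical.choose_spec (hstep i.val hi)
      have sj := Classical.choose_spec (hstep j.val hj)
      rw [heq] at si
      rcases si.2 with ⟨t1, h1⟩ | ⟨t1, h1⟩ <;> rcases sj.2 with ⟨t2, h2⟩ | ⟨t2, h2⟩
      · have e1 := hgi _ _ _ _ (t1.symm.trans t2)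
        exact Fin.ext (by omega)
      · have e1 := hgi _ _ _ _ (t1.symm.trans t2)
        have e2 := hgi _ _ _ _ (h1.symm.trans h2)
        omega
      · have e1 := hgi _ _ _ _ (t1.symm.trans t2)
        have e2 := hgi _ _ _ _ (h1.symm.trans h2)
        omega
      · have e1 := hgi _ _ _ _ (t1.symm.trans t2)
        exact Fin.ext (by omega)
    · rw [dif_pos hi, dif_neg hj] at heq
      have si := Classical.choose_spec (hstep i.val hi)
      rw [heq] at si
      exact absurd rfl si.1.2
    · rw [dif_neg hi, dif_pos hj] at heq
      have sj := Classical.choose_spec (hstep j.val hj)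
      rw [← heq] at sj
      exact absurd rfl sj.1.2
    · exact Fin.ext (by omega)
  · -- vs injective on castSucc
    intro i j heq
    simp only [Fin.coe_castSucc] at heq
    rw [dif_pos i.isLt, dif_pos j.isLt] at heq
    exact Fin.ext (congrArg Fin.val ((hnodup.get_inj_iff).mp heq))
  · -- closes up
    have h1 : ¬ ((Fin.last L.length).val < L.length) := by simp
    have h2 : ((0 : Fin (L.length + 1)).val < L.length) := hpos
    simp only [dif_neg h1, dif_pos h2]
    rw [← hhead, List.head_eq_getElem_zero hne]
    simp [List.get_eq_getElem]
  · -- arc conditions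
    intro i
    simp only [Fin.coe_castSucc, Fin.val_succ]
    by_cases hi : i.val + 1 < L.length
    · have si := Classical.choose_spec (hstep i.val hi)
      rw [dif_pos hi, dif_pos (show (i : ℕ) < L.length from i.isLt), dif_pos hi]
      refine ⟨si.1.1, ?_⟩
      rcases si.2 with ⟨t, h⟩ | ⟨t, h⟩
      · exact .inl ⟨t, h⟩
      · exact .inr ⟨h, t⟩
    · refine ⟨?_, ?_⟩
      · rw [dif_neg hi]; exact ha₀
      · rw [dif_neg hi, dif_pos (show (i : ℕ) < L.length from i.isLt), dif_neg hi]
        left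
        refine ⟨?_, rfl⟩
        rw [← hlast, List.getLast_eq_getElem]
        simp only [List.get_eq_getElem]
        congr 1
        omega

/-! ### Discrete Jordan-type parity argument in `ℤ × ℤ` -/

abbrev Pt := ℤ × ℤ

def stp (L : List Pt) : List (Pt × Pt) := L.zip L.tail

def unitS (s : Pt × Pt) : Prop :=
  (s.2.1 = s.1.1 ∧ (s.2.2 = s.1.2 + 1 ∨ s.1.2 = s.2.2 + 1)) ∨
  (s.2.2 = s.1.2 ∧ (s.2.1 = s.1.1 + 1 ∨ s.1.1 = s.2.1 + 1))

def hX (ρ γ : ℤ) (s : Pt × Pt) : Bool :=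
  decide (s.1.1 = s.2.1 ∧ s.1.1 ≤ ρ ∧
    ((s.1.2 = γ ∧ s.2.2 = γ + 1) ∨ (s.1.2 = γ + 1 ∧ s.2.2 = γ)))

def vX (ρ γ : ℤ) (s : Pt × Pt) : Bool :=
  decide (s.1.2 = γ ∧ s.2.2 = γ ∧
    ((s.1.1 = ρ ∧ s.2.1 = ρ + 1) ∨ (s.1.1 = ρ + 1 ∧ s.2.1 = ρ)))

def inA (ρ γ : ℤ) (p : Pt) : Bool := decide (p.2 = γ ∧ p.1 ≤ ρ)

lemma mem_stp {L : List Pt} {s : Pt × Pt} (h : s ∈ stp L) : s.1 ∈ L ∧ s.2 ∈ L := by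
  rcases s with ⟨a, b⟩
  have := List.of_mem_zip h
  exact ⟨this.1, L.tail_subset this.2⟩

lemma stp_rel {α : Type*} {r : α → α → Prop} :
    ∀ (L : List α), List.Chain' r L → ∀ s ∈ L.zip L.tail, r s.1 s.2
  | [], _, s, hs => by simp at hs
  | [x], _, s, hs => by simp at hs
  | x :: y :: t, h, s, hs => by
    rw [show (x :: y :: t).zip (x :: y :: t).tail = (x, y) :: ((y :: t).zip t) from rfl] at hs
    rcases List.mem_cons.mp hs with rfl | hs'
    · exact (List.isChain_cons_cons.mp h).1
    · exact stp_rel (y :: t) (List.isChain_cons_cons.mp h).2 s hs'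

lemma tel (f : Pt → Bool) :
    ∀ (L : List Pt) (x z : Pt), L.head? = some x → L.getLast? = some z →
      ((stp L).countP (fun s => f s.1 != f s.2)) % 2 = (if f x = f z then 0 else 1)
  | [], x, z, hh, _ => by simp at hh
  | [a], x, z, hh, hl => by
    simp only [List.head?_cons, Option.some.injEq] at hh
    simp only [List.getLast?_singleton, Option.some.injEq] at hl
    subst hh; subst hl
    simp [stp]
  | a :: b :: t, x, z, hh, hl => by
    have ih := tel f (b :: t) b z (by simp)
      (by rw [← hl]; exact (List.getLast?_cons_cons).symm)
    simp only [List.head?_cons, Option.some.injEq] at hh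
    subst hh
    rw [show stp (a :: b :: t) = (a, b) :: stp (b :: t) from rfl, List.countP_cons]
    rcases Bool.eq_false_or_eq_true (f a) with h1 | h1 <;>
      rcases Bool.eq_false_or_eq_true (f b) with h2 | h2 <;>
        rcases Bool.eq_false_or_eq_true (f z) with h3 | h3 <;>
          simp only [h1, h2, h3] at ih ⊢ <;> simp at ih ⊢ <;> omega

lemma countP_or {α : Type*} (p q : α → Bool) :
    ∀ (L : List α), (∀ a ∈ L, ¬(p a = true ∧ q a = true)) →
      L.countP (fun a => p a || q a) = L.countP p + L.countP q
  | [], _ => by simp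
  | x :: t, h => by
    have ih := countP_or p q t (fun a ha => h a (List.mem_cons_of_mem _ ha))
    simp only [List.countP_cons]
    have hx := h x (List.mem_cons_self)
    cases hp : p x <;> cases hq : q x <;> simp_all <;> omega

/-- parity relation for a "right move" of the base point -/
lemma hrel (L : List Pt) (s₀ e₀ : Pt) (hh : L.head? = some s₀) (hl : L.getLast? = some e₀)
    (hu : ∀ s ∈ stp L, unitS s) (ρ γ : ℤ) :
    ((stp L).countP (hX ρ γ) + (stp L).countP (hX ρ (γ + 1)) + (stp L).countP (vX ρ (γ + 1))
      + (if inA ρ (γ + 1) s₀ = true then 1 else 0)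
      + (if inA ρ (γ + 1) e₀ = true then 1 else 0)) % 2 = 0 := by
  have htel := tel (inA ρ (γ + 1)) L s₀ e₀ hh hl
  have hcongr : (stp L).countP (fun s => inA ρ (γ + 1) s.1 != inA ρ (γ + 1) s.2) =
      (stp L).countP (fun s => hX ρ γ s || (hX ρ (γ + 1) s || vX ρ (γ + 1) s)) := by
    apply List.countP_congr
    intro s hs
    have hus := hu s hs
    unfold unitS at hus
    simp only [inA, hX, vX, bne_iff_ne, ne_eq, decide_eq_decide, decide_eq_true_eq,
      Bool.or_eq_true]
    omega
  have hsplit : (stp L).countP (fun s => hX ρ γ s || (hX ρ (γ + 1) s || vX ρ (γ + 1) s)) =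
      (stp L).countP (hX ρ γ) + ((stp L).countP (hX ρ (γ + 1)) + (stp L).countP (vX ρ (γ + 1))) := by
    rw [countP_or _ _ _ (fun a _ => ?_), countP_or _ _ _ (fun a _ => ?_)] <;>
      · simp only [hX, vX, decide_eq_true_eq, Bool.or_eq_true]; omega
  rw [hcongr, hsplit] at htel
  rcases Bool.eq_false_or_eq_true (inA ρ (γ + 1) s₀) with h1 | h1 <;>
    rcases Bool.eq_false_or_eq_true (inA ρ (γ + 1) e₀) with h2 | h2 <;>
      simp only [h1, h2] at htel ⊢ <;> simp at htel ⊢ <;> omega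

/-- the parity function -/
def Fpar (L : List Pt) (m₂ m₄ : ℤ) (v : Pt) : ℕ :=
  ((stp L).countP (hX v.1 v.2) + (if m₂ ≤ v.2 ∧ v.2 < m₄ then 1 else 0)) % 2

lemma move_right (L : List Pt) (m₂ m₄ : ℤ) (hm : m₂ < m₄)
    (hh : L.head? = some ((0 : ℤ), m₂)) (hl : L.getLast? = some ((0 : ℤ), m₄))
    (hu : ∀ s ∈ stp L, unitS s) (v : Pt) (hrow : 0 ≤ v.1) (hv' : (v.1, v.2 + 1) ∉ L) :
    Fpar L m₂ m₄ v = Fpar L m₂ m₄ (v.1, v.2 + 1) := by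
  have h := hrel L _ _ hh hl hu v.1 v.2
  have hcV : (stp L).countP (vX v.1 (v.2 + 1)) = 0 := by
    rw [List.countP_eq_zero]
    intro s hs hsx
    simp only [vX, decide_eq_true_eq] at hsx
    have hm := mem_stp hs
    rcases hsx.2.2 with ⟨e1, e2⟩ | ⟨e1, e2⟩
    · exact hv' (by
        have : s.1 = (v.1, v.2 + 1) := Prod.ext e1 hsx.1
        rw [← this]; exact hm.1)
    · exact hv' (by
        have : s.2 = (v.1, v.2 + 1) := Prod.ext e2 hsx.2.1
        rw [← this]; exact hm.2)
  have e1 : (if inA v.1 (v.2 + 1) ((0 : ℤ), m₂) = true then 1 else 0) =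
      (if m₂ = v.2 + 1 then 1 else 0) := by
    simp only [inA, decide_eq_true_eq]
    by_cases hc : m₂ = v.2 + 1 <;> simp [hc, hrow]
  have e2 : (if inA v.1 (v.2 + 1) ((0 : ℤ), m₄) = true then 1 else 0) =
      (if m₄ = v.2 + 1 then 1 else 0) := by
    simp only [inA, decide_eq_true_eq]
    by_cases hc : m₄ = v.2 + 1 <;> simp [hc, hrow]
  rw [hcV, e1, e2] at h
  have g1 : Fpar L m₂ m₄ v =
      ((stp L).countP (hX v.1 v.2) + (if m₂ ≤ v.2 ∧ v.2 < m₄ then 1 else 0)) % 2 := rfl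
  have g2 : Fpar L m₂ m₄ (v.1, v.2 + 1) =
      ((stp L).countP (hX v.1 (v.2 + 1)) + (if m₂ ≤ v.2 + 1 ∧ v.2 + 1 < m₄ then 1 else 0)) % 2 := rfl
  rw [g1, g2]
  clear g1 g2
  split_ifs at h ⊢ <;> omega

lemma move_down (L : List Pt) (m₂ m₄ : ℤ) (v : Pt) (hv' : (v.1 + 1, v.2) ∉ L) :
    Fpar L m₂ m₄ v = Fpar L m₂ m₄ (v.1 + 1, v.2) := by
  have hsplit : (stp L).countP (hX (v.1 + 1) v.2) =
      (stp L).countP (hX v.1 v.2) + (stp L).countP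
        (fun s => decide (s.1.1 = s.2.1 ∧ s.1.1 = v.1 + 1 ∧
          ((s.1.2 = v.2 ∧ s.2.2 = v.2 + 1) ∨ (s.1.2 = v.2 + 1 ∧ s.2.2 = v.2)))) := by
    rw [← countP_or _ _ _ (fun a _ => ?_)]
    · apply List.countP_congr
      intro s _
      simp only [hX, decide_eq_true_eq, Bool.or_eq_true]
      omega
    · simp only [hX, decide_eq_true_eq]; omega
  have hzero : (stp L).countP
      (fun s => decide (s.1.1 = s.2.1 ∧ s.1.1 = v.1 + 1 ∧
        ((s.1.2 = v.2 ∧ s.2.2 = v.2 + 1) ∨ (s.1.2 = v.2 + 1 ∧ s.2.2 = v.2)))) = 0 := by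
    rw [List.countP_eq_zero]
    intro s hs hsx
    simp only [decide_eq_true_eq] at hsx
    have hm := mem_stp hs
    rcases hsx.2.2 with ⟨e1, e2⟩ | ⟨e1, e2⟩
    · exact hv' (by
        have : s.1 = (v.1 + 1, v.2) := Prod.ext hsx.2.1 e1
        rw [← this]; exact hm.1)
    · exact hv' (by
        have : s.2 = (v.1 + 1, v.2) := Prod.ext (hsx.1 ▸ hsx.2.1) e2
        rw [← this]; exact hm.2)
  have g1 : Fpar L m₂ m₄ v =
      ((stp L).countP (hX v.1 v.2) + (if m₂ ≤ v.2 ∧ v.2 < m₄ then 1 else 0)) % 2 := rfl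
  have g2 : Fpar L m₂ m₄ (v.1 + 1, v.2) =
      ((stp L).countP (hX (v.1 + 1) v.2) + (if m₂ ≤ v.2 ∧ v.2 < m₄ then 1 else 0)) % 2 := rfl
  rw [g1, g2, hsplit, hzero]
  omega

lemma move (L : List Pt) (m₂ m₄ : ℤ) (hm : m₂ < m₄)
    (hh : L.head? = some ((0 : ℤ), m₂)) (hl : L.getLast? = some ((0 : ℤ), m₄))
    (hu : ∀ s ∈ stp L, unitS s) (v v' : Pt) (hs : unitS (v, v'))
    (hv : v ∉ L) (hv' : v' ∉ L) (hr : 0 ≤ v.1) (hr' : 0 ≤ v'.1) :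
    Fpar L m₂ m₄ v = Fpar L m₂ m₄ v' := by
  rcases hs with ⟨h1, h2 | h2⟩ | ⟨h1, h2 | h2⟩
  · -- right move
    have he : v' = (v.1, v.2 + 1) := by
      have a1 : v'.1 = v.1 := h1
      have a2 : v'.2 = v.2 + 1 := h2
      exact Prod.ext a1 a2
    rw [he] at hv' ⊢
    exact move_right L m₂ m₄ hm hh hl hu v hr hv'
  · -- left move
    have he : v = (v'.1, v'.2 + 1) := by
      have a1 : v'.1 = v.1 := h1
      have a2 : v.2 = v'.2 + 1 := h2
      exact Prod.ext a1.symm a2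
    rw [he] at hv ⊢
    exact (move_right L m₂ m₄ hm hh hl hu v' hr' hv).symm
  · -- down move
    have he : v' = (v.1 + 1, v.2) := by
      have a1 : v'.2 = v.2 := h1
      have a2 : v'.1 = v.1 + 1 := h2
      exact Prod.ext a2 a1
    rw [he] at hv' ⊢
    exact move_down L m₂ m₄ v hv'
  · -- up move
    have he : v = (v'.1 + 1, v'.2) := by
      have a1 : v'.2 = v.2 := h1
      have a2 : v.1 = v'.1 + 1 := h2
      exact Prod.ext a2 a1.symm
    rw [he] at hv ⊢
    exact (move_down L m₂ m₄ v' hv).symm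

lemma F_const (L : List Pt) (m₂ m₄ : ℤ) (hm : m₂ < m₄)
    (hh : L.head? = some ((0 : ℤ), m₂)) (hl : L.getLast? = some ((0 : ℤ), m₄))
    (hu : ∀ s ∈ stp L, unitS s) :
    ∀ (M : List Pt) (x z : Pt), M.head? = some x → M.getLast? = some z →
      (∀ s ∈ stp M, unitS s) → (∀ p ∈ M, p ∉ L) → (∀ p ∈ M, 0 ≤ p.1) →
      Fpar L m₂ m₄ x = Fpar L m₂ m₄ z
  | [], x, z, hhx, _, _, _, _ => by simp at hhx
  | [a], x, z, hhx, hlz, _, _, _ => by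
    simp only [List.head?_cons, Option.some.injEq] at hhx
    simp only [List.getLast?_singleton, Option.some.injEq] at hlz
    rw [← hhx, ← hlz]
  | a :: b :: t, x, z, hhx, hlz, hus, hdisj, hrow => by
    simp only [List.head?_cons, Option.some.injEq] at hhx
    subst hhx
    have hstep : unitS (a, b) := hus (a, b) (by
      rw [show stp (a :: b :: t) = (a, b) :: stp (b :: t) from rfl]
      exact List.mem_cons_self)
    have h1 := move L m₂ m₄ hm hh hl hu a b hstep
      (hdisj a (by simp)) (hdisj b (by simp)) (hrow a (by simp)) (hrow b (by simp))
    have h2 := F_const L m₂ m₄ hm hh hl hu (b :: t) b z (by simp)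
      (by rw [← hlz]; exact (List.getLast?_cons_cons).symm)
      (fun s hs => hus s (by
        rw [show stp (a :: b :: t) = (a, b) :: stp (b :: t) from rfl]
        exact List.mem_cons_of_mem _ hs))
      (fun p hp => hdisj p (List.mem_cons_of_mem _ hp))
      (fun p hp => hrow p (List.mem_cons_of_mem _ hp))
    exact h1.trans h2

/-- the discrete Jordan-type lemma: two vertex-disjoint lattice walks in the upper
half plane with interleaved endpoints on the boundary line cannot exist -/
lemma jordan (m₁ m₂ m₃ m₄ : ℤ) (h12 : m₁ < m₂) (h23 : m₂ < m₃) (h34 : m₃ < m₄)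
    (Lp Lq : List Pt)
    (hph : Lp.head? = some ((0 : ℤ), m₁)) (hpl : Lp.getLast? = some ((0 : ℤ), m₃))
    (hqh : Lq.head? = some ((0 : ℤ), m₂)) (hql : Lq.getLast? = some ((0 : ℤ), m₄))
    (hup : ∀ s ∈ stp Lp, unitS s) (huq : ∀ s ∈ stp Lq, unitS s)
    (hrp : ∀ p ∈ Lp, 0 ≤ p.1) (hrq : ∀ p ∈ Lq, 0 ≤ p.1)
    (hdisj : ∀ p ∈ Lp, p ∉ Lq) : False := by
  have hm24 : m₂ < m₄ := by omega
  have hcst := F_const Lq m₂ m₄ hm24 hqh hql huq Lp _ _ hph hpl hup hdisj hrp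
  have key : ∀ (c : ℤ), ((0 : ℤ), c) ∈ Lp → (stp Lq).countP (hX 0 c) = 0 := by
    intro c hc
    rw [List.countP_eq_zero]
    intro s hs hsx
    simp only [hX, decide_eq_true_eq] at hsx
    have hm := mem_stp hs
    have r1 := hrq s.1 hm.1
    have r2 := hrq s.2 hm.2
    obtain ⟨e0, e1, e2⟩ := hsx
    have hrow1 : s.1.1 = 0 := le_antisymm e1 r1
    have hrow2 : s.2.1 = 0 := by omega
    rcases e2 with ⟨f1, f2⟩ | ⟨f1, f2⟩
    · exact hdisj _ hc (by
        rw [show ((0 : ℤ), c) = s.1 from (Prod.ext hrow1 f1).symm]; exact hm.1)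
    · exact hdisj _ hc (by
        rw [show ((0 : ℤ), c) = s.2 from (Prod.ext hrow2 f2).symm]; exact hm.2)
  have hm1 : ((0 : ℤ), m₁) ∈ Lp := by
    cases Lp with
    | nil => simp at hph
    | cons a t =>
      simp only [List.head?_cons, Option.some.injEq] at hph
      rw [← hph]; exact List.mem_cons_self
  have hm3 : ((0 : ℤ), m₃) ∈ Lp := by
    have : ∀ (M : List Pt) (x : Pt), M.getLast? = some x → x ∈ M := by
      intro M
      induction M with
      | nil => intro x h; simp at h
      | cons a t ih =>
        intro x h
        cases t with
        | nil =>
          simp only [List.getLast?_singleton, Option.some.injEq] at h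
          rw [← h]; exact List.mem_cons_self
        | cons b u =>
          rw [List.getLast?_cons_cons] at h
          exact List.mem_cons_of_mem _ (ih x h)
    exact this Lp _ hpl
  have v1 : Fpar Lq m₂ m₄ ((0 : ℤ), m₁) = 0 := by
    have hrfl : Fpar Lq m₂ m₄ ((0 : ℤ), m₁) =
        ((stp Lq).countP (hX 0 m₁) + (if m₂ ≤ m₁ ∧ m₁ < m₄ then 1 else 0)) % 2 := rfl
    rw [hrfl, key m₁ hm1, if_neg (by omega)]
  have v3 : Fpar Lq m₂ m₄ ((0 : ℤ), m₃) = 1 := by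
    have hrfl : Fpar Lq m₂ m₄ ((0 : ℤ), m₃) =
        ((stp Lq).countP (hX 0 m₃) + (if m₂ ≤ m₃ ∧ m₃ < m₄ then 1 else 0)) % 2 := rfl
    rw [hrfl, key m₃ hm3, if_pos (by omega)]
  rw [hcst] at v1
  omega

lemma rtg_to_chain {S : Set GArc} {x y : ℕ × ℕ} (h : ReflTransGen (undirStep S) x y) :
    ∃ L : List (ℕ × ℕ), L.head? = some x ∧ L.getLast? = some y ∧
      List.Chain' (undirStep S) L ∧ ∀ z ∈ L, ReflTransGen (undirStep S) x z := by
  obtain ⟨l, hc, hl⟩ := List.exists_isChain_cons_of_relationReflTransGen h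
  refine ⟨x :: l, rfl, ?_, hc, chain_reach l x hc⟩
  rw [List.getLast?_eq_getLast (by simp), hl]

def emb (v : ℕ × ℕ) : Pt := ((v.1 : ℤ), (v.2 : ℤ))

lemma jordan_nat {Sp Sq : Set GArc} (m₁ m₂ m₃ m₄ : ℕ)
    (h12 : m₁ < m₂) (h23 : m₂ < m₃) (h34 : m₃ < m₄)
    (Lp Lq : List (ℕ × ℕ))
    (hph : Lp.head? = some (0, m₁)) (hpl : Lp.getLast? = some (0, m₃))
    (hqh : Lq.head? = some (0, m₂)) (hql : Lq.getLast? = some (0, m₄))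
    (hcp : List.Chain' (undirStep Sp) Lp) (hcq : List.Chain' (undirStep Sq) Lq)
    (hdisj : ∀ p ∈ Lp, p ∉ Lq) : False := by
  have hstp : ∀ (M : List (ℕ × ℕ)), stp (M.map emb) = (M.zip M.tail).map (Prod.map emb emb) := by
    intro M
    unfold stp
    rw [← List.map_tail, List.zip_map]
  have hunit : ∀ (SS : Set GArc) (M : List (ℕ × ℕ)), List.Chain' (undirStep SS) M →
      ∀ s ∈ stp (M.map emb), unitS s := by
    intro SS M hc s hs
    rw [hstp] at hs
    obtain ⟨s', hs', rfl⟩ := List.mem_map.mp hs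
    have hf := undirStep_fact (stp_rel M hc s' hs')
    rcases s' with ⟨⟨pa, pb⟩, ⟨qa, qb⟩⟩
    simp only [Prod.map, emb, unitS] at *
    omega
  have hrow : ∀ (M : List (ℕ × ℕ)), ∀ p ∈ M.map emb, (0 : ℤ) ≤ p.1 := by
    intro M p hp
    obtain ⟨q, _, rfl⟩ := List.mem_map.mp hp
    simp [emb]
  refine jordan (m₁ : ℤ) (m₂ : ℤ) (m₃ : ℤ) (m₄ : ℤ) (by omega) (by omega) (by omega)
    (Lp.map emb) (Lq.map emb) ?_ ?_ ?_ ?_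
    (hunit Sp Lp hcp) (hunit Sq Lq hcq) (hrow Lp) (hrow Lq) ?_
  · rw [List.head?_map, hph]; simp [emb]
  · rw [List.getLast?_map, hpl]; simp [emb]
  · rw [List.head?_map, hqh]; simp [emb]
  · rw [List.getLast?_map, hql]; simp [emb]
  · intro p hp hpq
    obtain ⟨q, hq, rfl⟩ := List.mem_map.mp hp
    obtain ⟨q', hq', he⟩ := List.mem_map.mp hpq
    have : q' = q := by
      rcases q with ⟨qa, qb⟩; rcases q' with ⟨qc, qd⟩
      simp only [emb, Prod.mk.injEq] at he
      have : qc = qa := by omega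
      have : qd = qb := by omega
      simp_all
    exact hdisj _ hq (this ▸ hq')

lemma valid_uw {L T : ℕ} {a : GArc} (h : ValidArc L T a) :
    (gTail a).1 < L ∧ (gTail a).2 < T ∧ (gHead a).1 < L ∧ (gHead a).2 < T := by
  rcases a with ⟨b, r, c⟩
  cases b <;> simp [ValidArc, gTail, gHead] at * <;> omega

/-- the core contradiction: four interleaved row-`l` positions whose root paths live in
two different components -/
lemma final_contra {S' : Set GArc} {l : ℕ} {c c' : ℕ × ℕ}
    (hjoin : ∀ z, ReflTransGen (undirStep S') c z → ReflTransGen (undirStep S') c' z → False)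
    (x₁ x₂ x₃ x₄ : ℕ) (h12 : x₁ < x₂) (h23 : x₂ < x₃) (h34 : x₃ < x₄)
    (m₁ m₂ m₃ m₄ : ℕ)
    (p₁ : ReflTransGen (dirStep S') (0, m₁) (l, x₁))
    (t₁ : ReflTransGen (undirStep S') c (0, m₁))
    (p₂ : ReflTransGen (dirStep S') (0, m₂) (l, x₂))
    (t₂ : ReflTransGen (undirStep S') c' (0, m₂))
    (p₃ : ReflTransGen (dirStep S') (0, m₃) (l, x₃))
    (t₃ : ReflTransGen (undirStep S') c (0, m₃))
    (p₄ : ReflTransGen (dirStep S') (0, m₄) (l, x₄))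
    (t₄ : ReflTransGen (undirStep S') c' (0, m₄)) : False := by
  have o12 : m₁ < m₂ := cross_disjoint p₁ p₂ h12 (fun z hz hz' =>
    hjoin z (t₁.trans (rtg_dir_undir hz.1)) (t₂.trans (rtg_dir_undir hz'.1)))
  have o23 : m₂ < m₃ := cross_disjoint p₂ p₃ h23 (fun z hz hz' =>
    hjoin z (t₃.trans (rtg_dir_undir hz'.1)) (t₂.trans (rtg_dir_undir hz.1)))
  have o34 : m₃ < m₄ := cross_disjoint p₃ p₄ h34 (fun z hz hz' =>
    hjoin z (t₃.trans (rtg_dir_undir hz.1)) (t₄.trans (rtg_dir_undir hz'.1)))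
  obtain ⟨Lp, php, hpl, hcp, hmp⟩ := rtg_to_chain ((reach_symm t₁).trans t₃)
  obtain ⟨Lq, hqh, hql, hcq, hmq⟩ := rtg_to_chain ((reach_symm t₂).trans t₄)
  refine jordan_nat m₁ m₂ m₃ m₄ o12 o23 o34 Lp Lq php hpl hqh hql hcp hcq ?_
  intro p hp hpq
  exact hjoin p (t₁.trans (hmp p hp)) (t₂.trans (hmq p hpq))

end GP

open Relation

/-- Each row of the grid contains at most two maximal intervals of type 2 vertices, or at
most two maximal intervals of type 1 vertices (types taken w.r.t. the spanning tree `S`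
with the tree arc `a₀` removed). -/
theorem row_at_most_two_maximal_intervals (L T : ℕ) (S : Set GArc)
    (htree : IsGridSpanningTree L T S) (hacc : Accessible L T S)
    (a₀ : GArc) (ha₀ : a₀ ∈ S) (l : ℕ) (hl : l < L) :
    AtMostTwoIntervalsOn T
        (fun i => Relation.ReflTransGen (undirStep (S \ {a₀})) (gHead a₀) (l, i)) ∨
      AtMostTwoIntervalsOn T
        (fun i => Relation.ReflTransGen (undirStep (S \ {a₀})) (gTail a₀) (l, i)) := by
  classical
  obtain ⟨hvalid, hconn, hnc⟩ := htree
  have hsep : ¬ ReflTransGen (undirStep (S \ {a₀})) (gHead a₀) (gTail a₀) :=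
    GP.no_sep ha₀ hnc
  have hjoin : ∀ z, ReflTransGen (undirStep (S \ {a₀})) (gTail a₀) z →
      ReflTransGen (undirStep (S \ {a₀})) (gHead a₀) z → False :=
    fun z h1 h2 => hsep (h2.trans (GP.reach_symm h1))
  have hb := GP.valid_uw (hvalid a₀ ha₀)
  have hxor : ∀ i, i < T →
      (¬ ReflTransGen (undirStep (S \ {a₀})) (gHead a₀) (l, i) ↔
        ReflTransGen (undirStep (S \ {a₀})) (gTail a₀) (l, i)) := by
    intro i hi
    constructor
    · intro hP
      rcases GP.comp_cases hsep (hconn (l, i) (gTail a₀) hl hi hb.1 hb.2.1) with hcs | h' | h'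
      · exact GP.reach_symm hcs
      · exact absurd h'.2 hsep
      · exact absurd (GP.reach_symm h'.1) hP
    · exact fun hQ hP => hjoin (l, i) hQ hP
  have fill : ∀ i c k, i < c → c < k → c < T →
      ReflTransGen (dirStep (S \ {a₀})) (gHead a₀) (l, i) →
      ReflTransGen (dirStep (S \ {a₀})) (gHead a₀) (l, k) →
      ReflTransGen (undirStep (S \ {a₀})) (gHead a₀) (l, c) := by
    intro i c k hic hck hcT h2i h2k
    obtain ⟨m, hm, hpath⟩ := hacc l c hl hcT
    obtain ⟨z, hz1, hz2⟩ := GP.cross_meet h2i h2k hpath hic hck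
    rcases GP.remove_arc (a₀ := a₀) hz2 with h' | h'
    · exact GP.rtg_dir_undir (hz1.trans h')
    · exact GP.rtg_dir_undir h'
  have rootT1 : ∀ x, x < T → ¬ ReflTransGen (undirStep (S \ {a₀})) (gHead a₀) (l, x) →
      ∃ m, ReflTransGen (dirStep (S \ {a₀})) (0, m) (l, x) ∧
        ReflTransGen (undirStep (S \ {a₀})) (gTail a₀) (0, m) := by
    intro x hx hP
    obtain ⟨m, hm, hpath⟩ := hacc l x hl hx
    rcases GP.remove_arc (a₀ := a₀) hpath with h' | h'
    · exact ⟨m, h', ((hxor x hx).mp hP).trans (GP.reach_symm (GP.rtg_dir_undir h'))⟩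
    · exact absurd (GP.rtg_dir_undir h') hP
  have rootB2 : ∀ x, x < T → ReflTransGen (undirStep (S \ {a₀})) (gHead a₀) (l, x) →
      ¬ ReflTransGen (dirStep (S \ {a₀})) (gHead a₀) (l, x) →
      ∃ m, ReflTransGen (dirStep (S \ {a₀})) (0, m) (l, x) ∧
        ReflTransGen (undirStep (S \ {a₀})) (gHead a₀) (0, m) := by
    intro x hx hP hnA
    obtain ⟨m, hm, hpath⟩ := hacc l x hl hx
    rcases GP.remove_arc (a₀ := a₀) hpath with h' | h'
    · exact ⟨m, h', hP.trans (GP.reach_symm (GP.rtg_dir_undir h'))⟩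
    · exact absurd h' hnA
  have fourA : ∀ x₁ x₂ x₃ x₄, x₁ < x₂ → x₂ < x₃ → x₃ < x₄ → x₄ < T →
      ReflTransGen (undirStep (S \ {a₀})) (gHead a₀) (l, x₁) →
      ¬ ReflTransGen (dirStep (S \ {a₀})) (gHead a₀) (l, x₁) →
      ¬ ReflTransGen (undirStep (S \ {a₀})) (gHead a₀) (l, x₂) →
      ReflTransGen (undirStep (S \ {a₀})) (gHead a₀) (l, x₃) →
      ¬ ReflTransGen (dirStep (S \ {a₀})) (gHead a₀) (l, x₃) →
      ¬ ReflTransGen (undirStep (S \ {a₀})) (gHead a₀) (l, x₄) → False := by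
    intro x₁ x₂ x₃ x₄ h12 h23 h34 h4T hP1 hA1 hP2 hP3 hA3 hP4
    obtain ⟨m₁, pm₁, tm₁⟩ := rootB2 x₁ (by omega) hP1 hA1
    obtain ⟨m₂, pm₂, tm₂⟩ := rootT1 x₂ (by omega) hP2
    obtain ⟨m₃, pm₃, tm₃⟩ := rootB2 x₃ (by omega) hP3 hA3
    obtain ⟨m₄, pm₄, tm₄⟩ := rootT1 x₄ h4T hP4
    exact GP.final_contra (fun z h1 h2 => hjoin z h2 h1) x₁ x₂ x₃ x₄ h12 h23 h34
      m₁ m₂ m₃ m₄ pm₁ tm₁ pm₂ tm₂ pm₃ tm₃ pm₄ tm₄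
  have fourB : ∀ x₁ x₂ x₃ x₄, x₁ < x₂ → x₂ < x₃ → x₃ < x₄ → x₄ < T →
      ¬ ReflTransGen (undirStep (S \ {a₀})) (gHead a₀) (l, x₁) →
      ReflTransGen (undirStep (S \ {a₀})) (gHead a₀) (l, x₂) →
      ¬ ReflTransGen (dirStep (S \ {a₀})) (gHead a₀) (l, x₂) →
      ¬ ReflTransGen (undirStep (S \ {a₀})) (gHead a₀) (l, x₃) →
      ReflTransGen (undirStep (S \ {a₀})) (gHead a₀) (l, x₄) →
      ¬ ReflTransGen (dirStep (S \ {a₀})) (gHead a₀) (l, x₄) → False := by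
    intro x₁ x₂ x₃ x₄ h12 h23 h34 h4T hP1 hP2 hA2 hP3 hP4 hA4
    obtain ⟨m₁, pm₁, tm₁⟩ := rootT1 x₁ (by omega) hP1
    obtain ⟨m₂, pm₂, tm₂⟩ := rootB2 x₂ (by omega) hP2 hA2
    obtain ⟨m₃, pm₃, tm₃⟩ := rootT1 x₃ (by omega) hP3
    obtain ⟨m₄, pm₄, tm₄⟩ := rootB2 x₄ h4T hP4 hA4
    exact GP.final_contra hjoin x₁ x₂ x₃ x₄ h12 h23 h34
      m₁ m₂ m₃ m₄ pm₁ tm₁ pm₂ tm₂ pm₃ tm₃ pm₄ tm₄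
  have alt6P : ∀ j₁ j₂ j₃ j₄ j₅ j₆, j₁ < j₂ → j₂ < j₃ → j₃ < j₄ → j₄ < j₅ → j₅ < j₆ →
      j₆ < T →
      ReflTransGen (undirStep (S \ {a₀})) (gHead a₀) (l, j₁) →
      ¬ ReflTransGen (undirStep (S \ {a₀})) (gHead a₀) (l, j₂) →
      ReflTransGen (undirStep (S \ {a₀})) (gHead a₀) (l, j₃) →
      ¬ ReflTransGen (undirStep (S \ {a₀})) (gHead a₀) (l, j₄) →
      ReflTransGen (undirStep (S \ {a₀})) (gHead a₀) (l, j₅) →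
      ¬ ReflTransGen (undirStep (S \ {a₀})) (gHead a₀) (l, j₆) → False := by
    intro j₁ j₂ j₃ j₄ j₅ j₆ h12 h23 h34 h45 h56 h6T p1 n2 p3 n4 p5 n6
    by_cases a1 : ReflTransGen (dirStep (S \ {a₀})) (gHead a₀) (l, j₁) <;>
      by_cases a3 : ReflTransGen (dirStep (S \ {a₀})) (gHead a₀) (l, j₃) <;>
        by_cases a5 : ReflTransGen (dirStep (S \ {a₀})) (gHead a₀) (l, j₅)
    · exact n2 (fill j₁ j₂ j₃ h12 h23 (by omega) a1 a3)
    · exact n2 (fill j₁ j₂ j₃ h12 h23 (by omega) a1 a3)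
    · exact n2 (fill j₁ j₂ j₅ h12 (by omega) (by omega) a1 a5)
    · exact fourA j₃ j₄ j₅ j₆ h34 h45 h56 h6T p3 a3 n4 p5 a5 n6
    · exact n4 (fill j₃ j₄ j₅ h34 h45 (by omega) a3 a5)
    · exact fourA j₁ j₂ j₅ j₆ h12 (by omega) h56 h6T p1 a1 n2 p5 a5 n6
    · exact fourA j₁ j₂ j₃ j₄ h12 h23 h34 (by omega) p1 a1 n2 p3 a3 n4
    · exact fourA j₁ j₂ j₃ j₄ h12 h23 h34 (by omega) p1 a1 n2 p3 a3 n4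
  have alt6N : ∀ j₁ j₂ j₃ j₄ j₅ j₆, j₁ < j₂ → j₂ < j₃ → j₃ < j₄ → j₄ < j₅ → j₅ < j₆ →
      j₆ < T →
      ¬ ReflTransGen (undirStep (S \ {a₀})) (gHead a₀) (l, j₁) →
      ReflTransGen (undirStep (S \ {a₀})) (gHead a₀) (l, j₂) →
      ¬ ReflTransGen (undirStep (S \ {a₀})) (gHead a₀) (l, j₃) →
      ReflTransGen (undirStep (S \ {a₀})) (gHead a₀) (l, j₄) →
      ¬ ReflTransGen (undirStep (S \ {a₀})) (gHead a₀) (l, j₅) →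
      ReflTransGen (undirStep (S \ {a₀})) (gHead a₀) (l, j₆) → False := by
    intro j₁ j₂ j₃ j₄ j₅ j₆ h12 h23 h34 h45 h56 h6T n1 p2 n3 p4 n5 p6
    by_cases a2 : ReflTransGen (dirStep (S \ {a₀})) (gHead a₀) (l, j₂) <;>
      by_cases a4 : ReflTransGen (dirStep (S \ {a₀})) (gHead a₀) (l, j₄) <;>
        by_cases a6 : ReflTransGen (dirStep (S \ {a₀})) (gHead a₀) (l, j₆)
    · exact n3 (fill j₂ j₃ j₄ h23 h34 (by omega) a2 a4)
    · exact n3 (fill j₂ j₃ j₄ h23 h34 (by omega) a2 a4)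
    · exact n3 (fill j₂ j₃ j₆ h23 (by omega) (by omega) a2 a6)
    · exact fourB j₃ j₄ j₅ j₆ h34 h45 h56 h6T n3 p4 a4 n5 p6 a6
    · exact n5 (fill j₄ j₅ j₆ h45 h56 (by omega) a4 a6)
    · exact fourB j₁ j₂ j₃ j₆ h12 h23 (by omega) h6T n1 p2 a2 n3 p6 a6
    · exact fourB j₁ j₂ j₃ j₄ h12 h23 h34 (by omega) n1 p2 a2 n3 p4 a4
    · exact fourB j₁ j₂ j₃ j₄ h12 h23 h34 (by omega) n1 p2 a2 n3 p4 a4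
  by_contra hcon
  push_neg at hcon
  obtain ⟨hA, hB⟩ := hcon
  unfold AtMostTwoIntervalsOn at hA hB
  rw [not_not] at hA hB
  obtain ⟨t₁, t₂, t₃, t₄, t₅, ht12, ht23, ht34, ht45, ht5T, hp1, hp2, hp3, hp4, hp5⟩ := hA
  obtain ⟨s₁, s₂, s₃, s₄, s₅, hs12, hs23, hs34, hs45, hs5T, hq1, hq2, hq3, hq4, hq5⟩ := hB
  simp only [] at hp1 hp2 hp3 hp4 hp5 hq1 hq2 hq3 hq4 hq5
  have nq1 : ¬ ReflTransGen (undirStep (S \ {a₀})) (gHead a₀) (l, s₁) :=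
    fun hP => hjoin (l, s₁) hq1 hP
  have nq3 : ¬ ReflTransGen (undirStep (S \ {a₀})) (gHead a₀) (l, s₃) :=
    fun hP => hjoin (l, s₃) hq3 hP
  have nq5 : ¬ ReflTransGen (undirStep (S \ {a₀})) (gHead a₀) (l, s₅) :=
    fun hP => hjoin (l, s₅) hq5 hP
  have pq2 : ReflTransGen (undirStep (S \ {a₀})) (gHead a₀) (l, s₂) := by
    by_contra hP
    exact hq2 ((hxor s₂ (by omega)).mp hP)
  have pq4 : ReflTransGen (undirStep (S \ {a₀})) (gHead a₀) (l, s₄) := by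
    by_contra hP
    exact hq4 ((hxor s₄ (by omega)).mp hP)
  rcases lt_trichotomy t₁ s₁ with h | h | h
  · exact alt6P t₁ s₁ s₂ s₃ s₄ s₅ h hs12 hs23 hs34 hs45 hs5T hp1 nq1 pq2 nq3 pq4 nq5
  · exact nq1 (h ▸ hp1)
  · exact alt6N s₁ t₁ t₂ t₃ t₄ t₅ h ht12 ht23 ht34 ht45 ht5T nq1 hp1 hp2 hp3 hp4 hp5
end
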